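/- arXiv:1502.05946 — 6 statements merged into one kernel-verified Lean document; each statement's English description precedes it below -/
import Mathlib

section
/- Let 0 ≤ σ₁ ≤ σ₂ ≤ ... ≤ σ_n be real numbers and let ε ∈ {±1}ⁿ. If the σⱼ are strictly increasing and positive, then the sign of the Vandermonde determinant Δ(ε₁σ₁, ..., ε_nσ_n) = ∏_{k>j}(ε_kσ_k − ε_jσ_j) equals ∏_{k even} ε_k. -/
open Finset

theorem vandermonde_sign (n : ℕ) (σ ε : Fin n → ℝ)
    (hσ : StrictMono σ) (hpos : ∀ i, 0 < σ i)
    (hε : ∀ i, ε i = 1 ∨ ε i = -1) :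
    Real.sign (∏ k : Fin n, ∏ j ∈ Finset.univ.filter (· < k), (ε k * σ k - ε j * σ j))
      = ∏ k ∈ Finset.univ.filter (fun k : Fin n => Even ((k : ℕ) + 1)), ε k := by
  have hfac : ∀ k j : Fin n, j < k →
      ε k * σ k - ε j * σ j = ε k * (σ k - ε k * ε j * σ j) := by
    intro k j _
    rcases hε k with h | h <;> rcases hε j with h' | h' <;> rw [h, h'] <;> ring
  have hcpos : ∀ k j : Fin n, j < k → 0 < σ k - ε k * ε j * σ j := by
    intro k j hjk
    have h1 := hσ hjk
    have h2 := hpos j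
    rcases hε k with h | h <;> rcases hε j with h' | h' <;> rw [h, h'] <;> nlinarith
  have hinner : ∀ k : Fin n,
      ∏ j ∈ Finset.univ.filter (· < k), (ε k * σ k - ε j * σ j)
        = ε k ^ (k : ℕ) * ∏ j ∈ Finset.univ.filter (· < k), (σ k - ε k * ε j * σ j) := by
    intro k
    rw [Finset.prod_congr rfl (fun j hj => hfac k j (by simpa using hj)),
      Finset.prod_mul_distrib, Finset.prod_const]
    congr 2
    have : Finset.univ.filter (· < k) = Finset.Iio k := by
      ext j; simp
    rw [this]
    exact Fin.card_Iio k
  -- total product = s * C, with C > 0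
  set C : ℝ := ∏ k : Fin n, ∏ j ∈ Finset.univ.filter (· < k), (σ k - ε k * ε j * σ j)
    with hC
  have hCpos : 0 < C := by
    apply Finset.prod_pos
    intro k _
    apply Finset.prod_pos
    intro j hj
    exact hcpos k j (by simpa using hj)
  have hsplit : (∏ k : Fin n, ∏ j ∈ Finset.univ.filter (· < k), (ε k * σ k - ε j * σ j))
      = (∏ k : Fin n, ε k ^ (k : ℕ)) * C := by
    rw [hC, ← Finset.prod_mul_distrib]
    exact Finset.prod_congr rfl fun k _ => hinner k
  -- the sign product
  have hpows : (∏ k : Fin n, ε k ^ (k : ℕ))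
      = ∏ k ∈ Finset.univ.filter (fun k : Fin n => Even ((k : ℕ) + 1)), ε k := by
    rw [Finset.prod_filter]
    apply Finset.prod_congr rfl
    intro k _
    rcases Nat.even_or_odd (k : ℕ) with hk | hk
    · rw [if_neg (by simp [Nat.even_add_one, Nat.not_odd_iff_even.2 hk])]
      rcases hε k with h | h <;> rw [h] <;> simp [hk.neg_one_pow]
    · rw [if_pos (by simpa [Nat.even_add_one] using Nat.not_even_iff_odd.2 hk)]
      rcases hε k with h | h <;> rw [h] <;> simp [hk.neg_one_pow]
  rw [hsplit]
  have hs : (∏ k : Fin n, ε k ^ (k : ℕ)) = 1 ∨ (∏ k : Fin n, ε k ^ (k : ℕ)) = -1 := by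
    apply Finset.prod_induction _ (fun x => x = 1 ∨ x = -1)
    · rintro a b (ha | ha) (hb | hb) <;> rw [ha, hb] <;> norm_num
    · left; rfl
    · intro k _
      rcases hε k with h | h <;> rw [h]
      · left; simp
      · rcases Nat.even_or_odd (k : ℕ) with hk | hk
        · left; exact hk.neg_one_pow
        · right; exact hk.neg_one_pow
  rcases hs with h | h <;> rw [h] at hpows ⊢
  · rw [one_mul, Real.sign_of_pos hCpos, hpows]
  · rw [neg_one_mul, Real.sign_of_neg (by linarith), hpows]
end

section
/- For real numbers 0 ≤ σ₁ ≤ ... ≤ σ_n, the symmetrized sum D(σ₁,...,σ_n) = ∑_{ε ∈ {±1}ⁿ} (∏_{k even} ε_k) · Δ(ε₁σ₁,...,ε_nσ_n) equals 2ⁿ · Δ(x₁²,...,x_{m̂}²) · (y₁⋯y_m) · Δ(y₁²,...,y_m²), where n = 2m+μ with μ ∈ {0,1}, m̂ = m+μ, xⱼ = σ_{2j−1} (j = 1,...,m̂) and yⱼ = σ_{2j} (j = 1,...,m). -/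
open Finset

/-- The Vandermonde product `∏_{k>j} (ξ k - ξ j)`. -/
def Vdm {n : ℕ} (ξ : Fin n → ℝ) : ℝ :=
  ∏ k : Fin n, ∏ j ∈ Finset.univ.filter (· < k), (ξ k - ξ j)

/-- Sign of a boolean, `±1`. -/
def sgn (b : Bool) : ℝ := if b then 1 else -1

/-- The symmetrized sum `D(σ) = ∑_{ε ∈ {±1}ⁿ} θ₀(ε) Δ(ε₁σ₁,…,ε_nσ_n)`,
where `θ₀(ε)` is the product of the signs at even (one-based) locations. -/
def Dsym (n : ℕ) (σ : Fin n → ℝ) : ℝ :=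
  ∑ ε : Fin n → Bool,
    (∏ k ∈ Finset.univ.filter (fun k : Fin n => Even ((k : ℕ) + 1)), sgn (ε k)) *
      Vdm (fun i => sgn (ε i) * σ i)



lemma Vdm_eq_det {n : ℕ} (ξ : Fin n → ℝ) : Vdm ξ = (Matrix.vandermonde ξ).det := by
  rw [Matrix.det_vandermonde, Vdm]
  rw [Finset.prod_sigma', Finset.prod_sigma']
  apply Finset.prod_nbij' (fun p => ⟨p.2, p.1⟩) (fun p => ⟨p.2, p.1⟩) <;>
    simp [Finset.mem_Ioi, Finset.mem_sigma]

def wt (n : ℕ) (i : Fin n) (b : Bool) : ℝ := if Even ((i:ℕ)+1) then sgn b else 1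

lemma Dsym_eq_det (n : ℕ) (σ : Fin n → ℝ) :
    Dsym n σ = (Matrix.of fun i j : Fin n =>
      ∑ b : Bool, wt n i b * (sgn b * σ i) ^ (j:ℕ)).det := by
  have key : (Matrix.of fun i j : Fin n => ∑ b : Bool, wt n i b * (sgn b * σ i) ^ (j:ℕ)) =
      fun i => ∑ b : Bool, wt n i b • (fun j : Fin n => (sgn b * σ i) ^ (j:ℕ)) := by
    funext i j
    simp [Finset.sum_apply]
  rw [Matrix.det, key]
  have hms := MultilinearMap.map_sum (Matrix.detRowAlternating.toMultilinearMap)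
    (g := fun (i : Fin n) (b : Bool) => wt n i b • fun j : Fin n => (sgn b * σ i) ^ (j:ℕ))
  simp only [AlternatingMap.coe_multilinearMap] at hms
  rw [hms, Dsym]
  congr 1; funext ε
  have hsm := MultilinearMap.map_smul_univ
    ((Matrix.detRowAlternating (R := ℝ) (n := Fin n)).toMultilinearMap)
    (fun i => wt n i (ε i)) (fun i (j : Fin n) => (sgn (ε i) * σ i) ^ (j:ℕ))
  simp only [AlternatingMap.coe_multilinearMap] at hsm
  rw [hsm]
  have : Matrix.detRowAlternating (fun i (j : Fin n) => (sgn (ε i) * σ i) ^ (j:ℕ))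
      = Vdm (fun i => sgn (ε i) * σ i) := by
    rw [Vdm_eq_det]; rfl
  rw [this, smul_eq_mul]
  congr 1
  rw [Finset.prod_filter]
  rfl

def itl (m μ : ℕ) (hμ : μ ≤ 1) : Fin (m + μ) ⊕ Fin m ≃ Fin (2 * m + μ) where
  toFun x := Sum.elim (fun a : Fin (m+μ) => (⟨2 * a, by omega⟩ : Fin (2*m+μ)))
    (fun a : Fin m => (⟨2 * a + 1, by omega⟩ : Fin (2*m+μ))) x
  invFun i := if h : (i : ℕ) % 2 = 0 then Sum.inl ⟨(i:ℕ)/2, by have := i.2; omega⟩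
    else Sum.inr ⟨(i:ℕ)/2, by have h2 := i.2; omega⟩
  left_inv := by
    rintro (a | a)
    · simp only [Sum.elim_inl]
      simp only [show 2 * (a:ℕ) % 2 = 0 by omega, ↓reduceDIte]
      simp only [Sum.inl.injEq, Fin.ext_iff]
      omega
    · simp only [Sum.elim_inr]
      simp only [show ¬ ((2 * (a:ℕ) + 1) % 2 = 0) by omega, ↓reduceDIte]
      simp only [Sum.inr.injEq, Fin.ext_iff]
      omega
  right_inv := by
    intro i
    by_cases h : (i:ℕ) % 2 = 0 <;> simp [h, Fin.ext_iff] <;> omega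

-- entry computations
lemma entry_ee (n : ℕ) (i : Fin n) (hi : ¬ Even ((i:ℕ)+1)) (s : ℝ) (j : ℕ) (hj : Even j) :
    (∑ b : Bool, wt n i b * (sgn b * s) ^ j) = 2 * s ^ j := by
  simp only [Fintype.sum_bool, wt, sgn, if_neg hi, if_pos, if_neg Bool.false_ne_true]
  rw [one_mul, one_mul, one_mul, neg_one_mul, hj.neg_pow]
  ring

lemma entry_eo (n : ℕ) (i : Fin n) (hi : ¬ Even ((i:ℕ)+1)) (s : ℝ) (j : ℕ) (hj : Odd j) :
    (∑ b : Bool, wt n i b * (sgn b * s) ^ j) = 0 := by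
  simp only [Fintype.sum_bool, wt, sgn, if_neg hi, if_pos, if_neg Bool.false_ne_true]
  rw [one_mul, one_mul, one_mul, neg_one_mul, hj.neg_pow]
  ring

lemma entry_oe (n : ℕ) (i : Fin n) (hi : Even ((i:ℕ)+1)) (s : ℝ) (j : ℕ) (hj : Even j) :
    (∑ b : Bool, wt n i b * (sgn b * s) ^ j) = 0 := by
  simp only [Fintype.sum_bool, wt, sgn, if_pos hi, if_pos, if_neg Bool.false_ne_true]
  rw [one_mul, one_mul, neg_one_mul, neg_one_mul, hj.neg_pow]
  ring

lemma entry_oo (n : ℕ) (i : Fin n) (hi : Even ((i:ℕ)+1)) (s : ℝ) (j : ℕ) (hj : Odd j) :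
    (∑ b : Bool, wt n i b * (sgn b * s) ^ j) = 2 * s ^ j := by
  simp only [Fintype.sum_bool, wt, sgn, if_pos hi, if_pos, if_neg Bool.false_ne_true]
  rw [one_mul, one_mul, neg_one_mul, neg_one_mul, hj.neg_pow]
  ring

theorem Dsym_factorization (m μ : ℕ) (hμ : μ = 0 ∨ μ = 1)
    (σ : Fin (2 * m + μ) → ℝ) (hord : Monotone σ) (hpos : ∀ i, 0 ≤ σ i) :
    Dsym (2 * m + μ) σ =
      2 ^ (2 * m + μ) *
        Vdm (fun j : Fin (m + μ) => (σ ⟨2 * (j : ℕ), by omega⟩) ^ 2) *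
        (∏ j : Fin m, σ ⟨2 * (j : ℕ) + 1, by omega⟩) *
        Vdm (fun j : Fin m => (σ ⟨2 * (j : ℕ) + 1, by omega⟩) ^ 2) := by
  have hμ' : μ ≤ 1 := by omega
  rw [Dsym_eq_det]
  have hsub : (Matrix.of fun i j : Fin (2*m+μ) =>
        ∑ b : Bool, wt (2*m+μ) i b * (sgn b * σ i) ^ (j:ℕ)).submatrix
        (itl m μ hμ') (itl m μ hμ') =
      Matrix.fromBlocks
        ((2:ℝ) • Matrix.vandermonde (fun a : Fin (m+μ) => (σ ⟨2 * (a:ℕ), by omega⟩) ^ 2)) 0 0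
        (Matrix.diagonal (fun a : Fin m => 2 * σ ⟨2 * (a:ℕ) + 1, by omega⟩) *
          Matrix.vandermonde (fun a : Fin m => (σ ⟨2 * (a:ℕ) + 1, by omega⟩) ^ 2)) := by
    ext i j
    rcases i with a | a <;> rcases j with b | b <;>
      simp only [Matrix.submatrix_apply, Matrix.fromBlocks_apply₁₁,
        Matrix.fromBlocks_apply₁₂, Matrix.fromBlocks_apply₂₁, Matrix.fromBlocks_apply₂₂,
        itl, Equiv.coe_fn_mk, Sum.elim_inl, Sum.elim_inr, Matrix.of_apply]
    · rw [entry_ee _ _ (by simp [parity_simps]) _ _ (by simp [parity_simps])]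
      simp [Matrix.smul_apply, Matrix.vandermonde, pow_mul]
    · rw [entry_eo _ _ (by simp [parity_simps]) _ _ (by simp [parity_simps])]
      simp
    · rw [entry_oe _ _ (by simp [parity_simps]) _ _ (by simp [parity_simps])]
      simp
    · rw [entry_oo _ _ (by simp [parity_simps]) _ _ (by simp [parity_simps])]
      rw [Matrix.diagonal_mul]
      simp only [Matrix.vandermonde_apply]
      rw [pow_succ', ← pow_mul]
      ring
  rw [← Matrix.det_submatrix_equiv_self (itl m μ hμ'), hsub,
    Matrix.det_fromBlocks_zero₁₂, Matrix.det_smul, Matrix.det_mul,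
    Matrix.det_diagonal, ← Vdm_eq_det, ← Vdm_eq_det]
  rw [Finset.prod_mul_distrib, Finset.prod_const]
  simp only [Fintype.card_fin, Finset.card_univ, smul_eq_mul]
  have h2 : (2:ℝ)^(2*m+μ) = 2^(m+μ) * 2^m := by rw [← pow_add]; congr 1; omega
  rw [h2]; ring
end

section
/- The polynomial D(σ₁,...,σ_n) = ∑_{ε ∈ {±1}ⁿ} (∏_{k even} ε_k) · Δ(ε₁σ₁,...,ε_nσ_n) is divisible (as a polynomial in σ₁,...,σ_n) by σ_j² − σ_{j+2}² for each j with 1 ≤ j ≤ n−2, and by σ₂. -/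
open Finset MvPolynomial

/-- The polynomial `D(σ₁,…,σ_n) = ∑_{ε ∈ {±1}ⁿ} θ₀(ε) Δ(ε₁σ₁,…,ε_nσ_n)`,
viewed as a multivariate polynomial in the variables `σ₁,…,σ_n`. -/
noncomputable def Dpoly (n : ℕ) : MvPolynomial (Fin n) ℝ :=
  ∑ ε : Fin n → Bool,
    C (∏ k ∈ Finset.univ.filter (fun k : Fin n => Even ((k : ℕ) + 1)), sgn (ε k)) *
      ∏ k : Fin n, ∏ j ∈ Finset.univ.filter (· < k),
        (C (sgn (ε k)) * X k - C (sgn (ε j)) * X j)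

lemma sgn_not (b : Bool) : sgn (!b) = - sgn b := by cases b <;> simp [sgn]

/-- Generic remainder lemma: `X a - q` divides `p - p[X a := q]`. -/
lemma X_sub_dvd {n : ℕ} (a : Fin n) (q p : MvPolynomial (Fin n) ℝ) :
    (X a - q) ∣ p - aeval (Function.update X a q) p := by
  induction p using MvPolynomial.induction_on with
  | C r => simp [algebraMap_eq]
  | add p p' hp hp' =>
      have := dvd_add hp hp'
      rw [map_add]
      convert this using 1
      ring
  | mul_X p i hp =>
      have key : p * X i - aeval (Function.update X a q) (p * X i)
          = (p - aeval (Function.update X a q) p) * X i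
            + aeval (Function.update X a q) p * (X i - Function.update X a q i) := by
        rw [map_mul, aeval_X]; ring
      rw [key]
      refine dvd_add (Dvd.dvd.mul_right hp _) ?_
      by_cases hia : i = a
      · subst hia
        simp only [Function.update_self]
        exact Dvd.dvd.mul_left dvd_rfl _
      · simp [Function.update_of_ne hia]

lemma aeval_Dpoly {n : ℕ} (f : Fin n → MvPolynomial (Fin n) ℝ) :
    aeval f (Dpoly n) =
      ∑ ε : Fin n → Bool,
        C (∏ k ∈ Finset.univ.filter (fun k : Fin n => Even ((k : ℕ) + 1)), sgn (ε k)) *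
          (Matrix.vandermonde (fun i => C (sgn (ε i)) * f i)).det := by
  rw [Dpoly, map_sum]
  refine Finset.sum_congr rfl fun ε _ => ?_
  rw [map_mul, Matrix.det_vandermonde]
  congr 1
  · simp [algebraMap_eq]
  · rw [map_prod]
    rw [show (∏ i : Fin n, ∏ j ∈ Ioi i, ((fun i => C (sgn (ε i)) * f i) j
        - (fun i => C (sgn (ε i)) * f i) i))
      = ∏ k : Fin n, ∏ j ∈ Finset.univ.filter (· < k),
          (C (sgn (ε k)) * f k - C (sgn (ε j)) * f j) from
      Finset.prod_comm' (by simp [Finset.mem_Ioi])]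
    refine Finset.prod_congr rfl fun k _ => ?_
    rw [map_prod]
    refine Finset.prod_congr rfl fun j _ => ?_
    simp [algebraMap_eq]

/-- The flip-two-bits involution as an `Equiv` (flips the bits at `a` and `c`;
if `a = c` it flips just one bit). -/
def flip2 {n : ℕ} (a c : Fin n) : (Fin n → Bool) ≃ (Fin n → Bool) where
  toFun ε := Function.update (Function.update ε a (!ε a)) c (!ε c)
  invFun ε := Function.update (Function.update ε a (!ε a)) c (!ε c)
  left_inv ε := by
    funext i
    by_cases hic : i = c <;> by_cases hia : i = a <;>
      simp_all [Function.update] <;> aesop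
  right_inv ε := by
    funext i
    by_cases hic : i = c <;> by_cases hia : i = a <;>
      simp_all [Function.update] <;> aesop

lemma flip2_apply_c {n : ℕ} (a c : Fin n) (ε : Fin n → Bool) :
    flip2 a c ε c = !ε c := by simp [flip2]

lemma flip2_apply_a {n : ℕ} {a c : Fin n} (hac : a ≠ c) (ε : Fin n → Bool) :
    flip2 a c ε a = !ε a := by
  simp [flip2, Function.update_of_ne hac]

lemma flip2_apply_other {n : ℕ} {a c i : Fin n} (hia : i ≠ a) (hic : i ≠ c)
    (ε : Fin n → Bool) : flip2 a c ε i = ε i := by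
  simp [flip2, Function.update_of_ne hia, Function.update_of_ne hic]

lemma sum_neg_self {ι : Type*} [Fintype ι] {n : ℕ}
    (F : ι → MvPolynomial (Fin n) ℝ) (e : ι ≃ ι) (h : ∀ x, F (e x) = -F x) :
    ∑ x, F x = 0 := by
  have h1 : ∑ x, F x = ∑ x, F (e x) := (Fintype.sum_equiv e _ _ fun x => rfl).symm
  have h3 : (2 : MvPolynomial (Fin n) ℝ) * (∑ x, F x) = 0 := by
    rw [two_mul]
    nth_rewrite 1 [h1]
    rw [← Finset.sum_add_distrib]
    refine Finset.sum_eq_zero fun x _ => ?_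
    rw [h x]
    ring
  rcases mul_eq_zero.mp h3 with h | h
  · exact absurd h two_ne_zero
  · exact h

lemma key_cancel {n : ℕ} (a c : Fin n) (hac : a ≠ c)
    (hpar : ((a : ℕ) + 1) % 2 = ((c : ℕ) + 1) % 2) (s : ℝ) (hs : s = 1 ∨ s = -1) :
    aeval (Function.update X a (C s * X c)) (Dpoly n) = 0 := by
  rw [aeval_Dpoly]
  set f : Fin n → MvPolynomial (Fin n) ℝ := Function.update X a (C s * X c) with hf
  set t : Finset (Fin n) := Finset.univ.filter (fun k : Fin n => Even ((k : ℕ) + 1)) with ht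
  refine sum_neg_self _ (flip2 a c) fun ε => ?_
  set v : (Fin n → Bool) → Fin n → MvPolynomial (Fin n) ℝ :=
    fun ε i => C (sgn (ε i)) * f i with hv
  have hfa : f a = C s * X c := Function.update_self _ _ _
  have hfc : f c = X c := Function.update_of_ne (Ne.symm hac) _ _
  -- prefactor is invariant
  have hmem : a ∈ t ↔ c ∈ t := by
    simp only [ht, Finset.mem_filter, Finset.mem_univ, true_and, Nat.even_iff]
    omega
  have hpref : (∏ k ∈ t, sgn ((flip2 a c) ε k)) = ∏ k ∈ t, sgn (ε k) := by
    have hval : ∀ k, sgn ((flip2 a c) ε k)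
        = (if k = a then (-1:ℝ) else if k = c then -1 else 1) * sgn (ε k) := by
      intro k
      by_cases hkc : k = c
      · rw [hkc, flip2_apply_c, sgn_not]
        simp [Ne.symm hac]
      · by_cases hka : k = a
        · rw [hka, flip2_apply_a hac, sgn_not]
          simp
        · rw [flip2_apply_other hka hkc]
          simp [hka, hkc]
    rw [Finset.prod_congr rfl (fun k _ => hval k), Finset.prod_mul_distrib]
    have hone : (∏ k ∈ t, (if k = a then (-1:ℝ) else if k = c then -1 else 1)) = 1 := by
      by_cases hat : a ∈ t
      · have hct : c ∈ t := hmem.mp hat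
        rw [← Finset.mul_prod_erase _ _ hat,
            ← Finset.mul_prod_erase _ _ (Finset.mem_erase.mpr ⟨Ne.symm hac, hct⟩)]
        rw [Finset.prod_eq_one]
        · simp [Ne.symm hac]
        · intro i hi
          simp only [Finset.mem_erase] at hi
          simp [hi.1, hi.2.1]
      · have hct : c ∉ t := fun h => hat (hmem.mpr h)
        rw [Finset.prod_eq_one]
        intro i hi
        have h1 : i ≠ a := fun h => hat (h ▸ hi)
        have h2 : i ≠ c := fun h => hct (h ▸ hi)
        simp [h1, h2]
    rw [hone, one_mul]
  show C (∏ k ∈ t, sgn ((flip2 a c) ε k)) * (Matrix.vandermonde (v ((flip2 a c) ε))).det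
      = -(C (∏ k ∈ t, sgn (ε k)) * (Matrix.vandermonde (v ε)).det)
  rw [hpref]
  -- determinant part
  rcases eq_or_ne (sgn (ε c)) (s * sgn (ε a)) with hb | hb
  · -- both determinants vanish: rows a and c coincide
    have hb' : (C (sgn (ε c)) : MvPolynomial (Fin n) ℝ) = C s * C (sgn (ε a)) := by
      rw [hb, map_mul]
    have hva : v ε a = v ε c := by
      simp only [hv, hfa, hfc, hb']
      ring
    have hva' : v ((flip2 a c) ε) a = v ((flip2 a c) ε) c := by
      simp only [hv, hfa, hfc, flip2_apply_a hac, flip2_apply_c, sgn_not, map_neg, hb']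
      ring
    have d1 : (Matrix.vandermonde (v ε)).det = 0 :=
      Matrix.det_zero_of_row_eq hac (by funext j; simp [Matrix.vandermonde, hva])
    have d2 : (Matrix.vandermonde (v ((flip2 a c) ε))).det = 0 :=
      Matrix.det_zero_of_row_eq hac (by funext j; simp [Matrix.vandermonde, hva'])
    rw [d1, d2]; ring
  · -- surviving terms: the flipped vector is the `swap a c` permutation of the original
    have hbc : sgn (ε c) = -(s * sgn (ε a)) := by
      rcases hs with rfl | rfl <;> cases h1 : ε a <;> cases h2 : ε c <;>
        simp_all [sgn] <;> norm_num
    have hss : s * s = 1 := by rcases hs with rfl | rfl <;> norm_num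
    have hbc' : (C (sgn (ε c)) : MvPolynomial (Fin n) ℝ) = -(C s * C (sgn (ε a))) := by
      rw [hbc, map_neg, map_mul]
    have hss' : (C s : MvPolynomial (Fin n) ℝ) * C s = 1 := by
      rw [← map_mul, hss, map_one]
    have e1 : v ((flip2 a c) ε) c = v ε a := by
      simp only [hv, hfa, hfc, flip2_apply_c, sgn_not, map_neg, hbc']
      ring
    have e2 : v ((flip2 a c) ε) a = v ε c := by
      simp only [hv, hfa, hfc, flip2_apply_a hac, sgn_not, map_neg, hbc']
      calc -C (sgn (ε a)) * (C s * X c)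
          = -(C s * C (sgn (ε a))) * (C s * C s) * X c := by rw [hss']; ring
        _ = -(C s * C (sgn (ε a))) * X c := by rw [hss']; ring
    have hswap : v ((flip2 a c) ε) = v ε ∘ (Equiv.swap a c) := by
      funext i
      by_cases hic : i = c
      · rw [hic]
        simpa [Equiv.swap_apply_right] using e1
      · by_cases hia : i = a
        · rw [hia]
          simpa [Equiv.swap_apply_left] using e2
        · simp only [hv, Function.comp_apply,
            Equiv.swap_apply_of_ne_of_ne hia hic, flip2_apply_other hia hic]
    rw [hswap]
    have hdet : (Matrix.vandermonde (v ε ∘ (Equiv.swap a c))).det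
        = -(Matrix.vandermonde (v ε)).det := by
      have hsub : Matrix.vandermonde (v ε ∘ (Equiv.swap a c))
          = (Matrix.vandermonde (v ε)).submatrix (Equiv.swap a c) id := by
        funext i j
        simp [Matrix.vandermonde, Matrix.submatrix]
      rw [hsub, Matrix.det_permute, Equiv.Perm.sign_swap hac]
      simp
    rw [hdet]; ring

lemma key_cancel0 {n : ℕ} (a : Fin n) (ha : Even ((a : ℕ) + 1)) :
    aeval (Function.update X a (0 : MvPolynomial (Fin n) ℝ)) (Dpoly n) = 0 := by
  rw [aeval_Dpoly]
  set f : Fin n → MvPolynomial (Fin n) ℝ := Function.update X a (0 : MvPolynomial (Fin n) ℝ) with hf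
  set t : Finset (Fin n) := Finset.univ.filter (fun k : Fin n => Even ((k : ℕ) + 1)) with ht
  refine sum_neg_self _ (flip2 a a) fun ε => ?_
  have hat : a ∈ t := by simp [ht, ha]
  have hfa : f a = 0 := Function.update_self _ _ _
  -- the vandermonde vectors agree
  have hvv : (fun i => C (sgn ((flip2 a a) ε i)) * f i) = fun i => C (sgn (ε i)) * f i := by
    funext i
    by_cases hia : i = a
    · rw [hia, hfa]; ring
    · rw [flip2_apply_other hia hia]
  -- prefactor flips sign
  have hpref : (∏ k ∈ t, sgn ((flip2 a a) ε k)) = -∏ k ∈ t, sgn (ε k) := by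
    have hval : ∀ k, sgn ((flip2 a a) ε k)
        = (if k = a then (-1:ℝ) else 1) * sgn (ε k) := by
      intro k
      by_cases hka : k = a
      · rw [hka, flip2_apply_c, sgn_not]; simp
      · rw [flip2_apply_other hka hka]; simp [hka]
    rw [Finset.prod_congr rfl (fun k _ => hval k), Finset.prod_mul_distrib]
    have hone : (∏ k ∈ t, (if k = a then (-1:ℝ) else 1)) = -1 := by
      rw [← Finset.mul_prod_erase _ _ hat, Finset.prod_eq_one]
      · simp
      · intro i hi
        simp only [Finset.mem_erase] at hi
        simp [hi.1]
    rw [hone]; ring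
  rw [hpref, hvv, map_neg]; ring

theorem Dpoly_divisibility (n : ℕ) (hn : 2 ≤ n) :
    (∀ j : ℕ, (h : j + 2 < n) →
        (X (⟨j, by omega⟩ : Fin n) ^ 2 - X (⟨j + 2, h⟩ : Fin n) ^ 2) ∣ Dpoly n) ∧
      X (⟨1, by omega⟩ : Fin n) ∣ Dpoly n := by
  constructor
  · intro j h
    set a : Fin n := ⟨j, by omega⟩ with hA
    set c : Fin n := ⟨j + 2, h⟩ with hC
    have hac : a ≠ c := by simp [hA, hC, Fin.ext_iff]
    have hpar : ((a : ℕ) + 1) % 2 = ((c : ℕ) + 1) % 2 := by simp [hA, hC]; omega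
    -- first factor: X a - X c divides Dpoly
    have h1 : (X a - X c) ∣ Dpoly n := by
      have hz := key_cancel a c hac hpar 1 (Or.inl rfl)
      have := X_sub_dvd a (C 1 * X c) (Dpoly n)
      rw [hz, sub_zero] at this
      simpa using this
    obtain ⟨u, hu⟩ := h1
    -- second factor divides the cofactor
    have h2 : (X a + X c) ∣ u := by
      have hz := key_cancel a c hac hpar (-1) (Or.inr rfl)
      rw [hu, map_mul] at hz
      have heval : aeval (Function.update X a (C (-1 : ℝ) * X c)) (X a - X c : MvPolynomial (Fin n) ℝ)
          = -(2 : MvPolynomial (Fin n) ℝ) * X c := by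
        rw [map_sub, aeval_X, aeval_X, Function.update_self,
          Function.update_of_ne (Ne.symm hac)]
        rw [map_neg, map_one]
        ring
      rw [heval] at hz
      rcases mul_eq_zero.mp hz with h0 | h0
      · exfalso
        rcases mul_eq_zero.mp h0 with h0 | h0
        · exact (by simpa using h0 : ¬ (2 : MvPolynomial (Fin n) ℝ) = 0)
            (by simpa using neg_eq_zero.mp h0)
        · exact MvPolynomial.X_ne_zero c h0
      · have := X_sub_dvd a (C (-1) * X c) u
        rw [h0, sub_zero] at this
        have hrw : X a - C (-1 : ℝ) * X c = X a + X c := by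
          rw [map_neg, C_1]
          ring
        rwa [hrw] at this
    obtain ⟨w, hw⟩ := h2
    exact ⟨w, by rw [hu, hw]; ring⟩
  · set a : Fin n := ⟨1, by omega⟩ with hA
    have hz := key_cancel0 a (by simp [hA])
    have := X_sub_dvd a (0 : MvPolynomial (Fin n) ℝ) (Dpoly n)
    rw [hz, sub_zero, sub_zero] at this
    exact this
end

section
/- Let S = diag(s₁,...,s_m) be a real diagonal matrix, u, v ∈ ℝᵐ, and set rⱼ = √(uⱼ² + vⱼ²). Then the (2m)×(2m+1) block matrix M₁ = [[u, S, 0], [v, 0, S]] and the matrix M₂ = [[0, S, 0], [r, 0, S]] have the same singular values. -/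
open Matrix

/-- The `(2m)×(2m+1)` block matrix `M₁ = [[u, S, 0], [v, 0, S]]`, where
`S = diag(s₁,…,s_m)`. -/
def borderedBlock {m : ℕ} (u v s : Fin m → ℝ) :
    Matrix (Fin m ⊕ Fin m) (Unit ⊕ (Fin m ⊕ Fin m)) ℝ :=
  Matrix.of fun i j =>
    match i, j with
    | Sum.inl i, Sum.inl _ => u i
    | Sum.inl i, Sum.inr (Sum.inl j) => if i = j then s i else 0
    | Sum.inl _, Sum.inr (Sum.inr _) => 0
    | Sum.inr i, Sum.inl _ => v i
    | Sum.inr _, Sum.inr (Sum.inl _) => 0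
    | Sum.inr i, Sum.inr (Sum.inr j) => if i = j then s i else 0

open Polynomial in
theorem charpoly_conj' {n R : Type*} [Fintype n] [DecidableEq n] [CommRing R]
    (G A : Matrix n n R) (h : G * Gᵀ = 1) (h2 : Gᵀ * G = 1) :
    (G * A * Gᵀ).charpoly = A.charpoly := by
  have hmap : (G.map (C : R →+* R[X])) * (Gᵀ.map C) = 1 := by
    rw [← Matrix.map_mul, h, Matrix.map_one _ (map_zero C) (map_one C)]
  have hmap2 : (Gᵀ.map (C : R →+* R[X])) * (G.map C) = 1 := by
    rw [← Matrix.map_mul, h2, Matrix.map_one _ (map_zero C) (map_one C)]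
  have key : charmatrix (G * A * Gᵀ) = G.map C * charmatrix A * Gᵀ.map C := by
    unfold charmatrix
    rw [Matrix.mul_sub, Matrix.sub_mul, _root_.map_mul, _root_.map_mul]
    simp only [RingHom.mapMatrix_apply]
    congr 1
    rw [← (Matrix.scalar_commute (X : R[X]) (Commute.all X) (G.map C)).eq,
      Matrix.mul_assoc, hmap, Matrix.mul_one]
  rw [Matrix.charpoly, Matrix.charpoly, key, det_mul, det_mul, mul_comm, ← mul_assoc,
    ← det_mul, hmap2, det_one, one_mul]

theorem borderedBlock_mulT {m : ℕ} (u v s : Fin m → ℝ) :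
    borderedBlock u v s * (borderedBlock u v s)ᵀ =
      Matrix.of fun i j =>
        match i, j with
        | Sum.inl i, Sum.inl j => u i * u j + (if i = j then s i * s j else 0)
        | Sum.inl i, Sum.inr j => u i * v j
        | Sum.inr i, Sum.inl j => v i * u j
        | Sum.inr i, Sum.inr j => v i * v j + (if i = j then s i * s j else 0) := by
  ext i j
  rcases i with i | i <;> rcases j with j | j <;>
    simp [borderedBlock, Matrix.mul_apply, Fintype.sum_sum_type, ite_and,
      Finset.sum_ite_eq, mul_ite, ite_mul, eq_comm] <;>
    rcases eq_or_ne i j with h | h <;> simp [h]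

noncomputable def givensG {m : ℕ} (a b : Fin m → ℝ) :
    Matrix (Fin m ⊕ Fin m) (Fin m ⊕ Fin m) ℝ :=
  Matrix.of fun i j =>
    match i, j with
    | Sum.inl i, Sum.inl j => if i = j then a i else 0
    | Sum.inl i, Sum.inr j => if i = j then b i else 0
    | Sum.inr i, Sum.inl j => if i = j then -(b i) else 0
    | Sum.inr i, Sum.inr j => if i = j then a i else 0

theorem givensG_orth {m : ℕ} (a b : Fin m → ℝ) (hab : ∀ i, a i ^ 2 + b i ^ 2 = 1) :
    givensG a b * (givensG a b)ᵀ = 1 ∧ (givensG a b)ᵀ * givensG a b = 1 := by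
  constructor <;> (ext i j; rcases i with i | i <;> rcases j with j | j <;>
    simp [givensG, Matrix.mul_apply, Fintype.sum_sum_type, ite_and,
      Finset.sum_ite_eq, mul_ite, ite_mul, eq_comm, Matrix.one_apply] <;>
    rcases eq_or_ne i j with h | h <;>
    simp [h] <;> nlinarith [hab j, hab i])

theorem key_conj {m : ℕ} (u v s a b r : Fin m → ℝ)
    (ha : ∀ i, a i * r i = v i) (hb : ∀ i, b i * r i = u i)
    (hab : ∀ i, a i ^ 2 + b i ^ 2 = 1) :
    givensG a b * (borderedBlock (fun _ => 0) r s * (borderedBlock (fun _ => 0) r s)ᵀ) *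
      (givensG a b)ᵀ = borderedBlock u v s * (borderedBlock u v s)ᵀ := by
  have hu : u = fun i => b i * r i := by funext i; exact (hb i).symm
  have hv : v = fun i => a i * r i := by funext i; exact (ha i).symm
  subst hu hv
  rw [borderedBlock_mulT, borderedBlock_mulT]
  ext i j
  rcases i with i | i <;> rcases j with j | j <;>
    simp [givensG, Matrix.mul_apply, Fintype.sum_sum_type, ite_and,
      Finset.sum_ite_eq, mul_ite, ite_mul, eq_comm] <;>
    rcases eq_or_ne i j with h | h <;>
    simp [h]
  all_goals first
    | ring1
    | linear_combination (s j * s j) * hab j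
    | linear_combination (-(s j * s j)) * hab j

/-- The matrices `M₁ = [[u, S, 0], [v, 0, S]]` and `M₂ = [[0, S, 0], [r, 0, S]]`,
with `rⱼ = √(uⱼ² + vⱼ²)`, have the same singular values: the characteristic
polynomials of `M₁M₁ᵀ` and `M₂M₂ᵀ` coincide. -/
theorem borderedBlock_same_singular_values {m : ℕ} (u v s : Fin m → ℝ) :
    (borderedBlock u v s * (borderedBlock u v s)ᵀ).charpoly =
      (borderedBlock (fun _ => 0) (fun j => Real.sqrt (u j ^ 2 + v j ^ 2)) s *
        (borderedBlock (fun _ => 0) (fun j => Real.sqrt (u j ^ 2 + v j ^ 2)) s)ᵀ).charpoly := by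
  set r : Fin m → ℝ := fun j => Real.sqrt (u j ^ 2 + v j ^ 2) with hrdef
  set a : Fin m → ℝ := fun j => if r j = 0 then 1 else v j / r j with hadef
  set b : Fin m → ℝ := fun j => if r j = 0 then 0 else u j / r j with hbdef
  have hrsq : ∀ j, r j ^ 2 = u j ^ 2 + v j ^ 2 := fun j => Real.sq_sqrt (by positivity)
  have hr0 : ∀ j, r j = 0 → u j = 0 ∧ v j = 0 := by
    intro j h
    have := hrsq j
    rw [h] at this
    constructor <;> nlinarith
  have ha : ∀ j, a j * r j = v j := by
    intro j
    by_cases h : r j = 0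
    · simp [hadef, h, (hr0 j h).2]
    · simp [hadef, h, div_mul_cancel₀ _ h]
  have hb : ∀ j, b j * r j = u j := by
    intro j
    by_cases h : r j = 0
    · simp [hbdef, h, (hr0 j h).1]
    · simp [hbdef, h, div_mul_cancel₀ _ h]
  have hab : ∀ j, a j ^ 2 + b j ^ 2 = 1 := by
    intro j
    by_cases h : r j = 0
    · simp [hadef, hbdef, h]
    · have := hrsq j
      simp only [hadef, hbdef, if_neg h]
      field_simp
      linarith
  obtain ⟨h1, h2⟩ := givensG_orth a b hab
  rw [← key_conj u v s a b r ha hb hab]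
  exact charpoly_conj' _ _ h1 h2
end

section
/- Let s₁ > s₂ > ... > s_m̂ ≥ 0 and t₁ > s₁ > t₂ > s₂ > ... > t_m̂ > s_m̂ be strictly interlacing real numbers. Then the unique positive solution r ∈ ℝ_{>0}^m̂ of the secular equations ∑_{k=1}^{m̂} r_k²/(t_j² − s_k²) = 1 for j = 1,...,m̂ is given explicitly by r_j² = −ω_t(s_j²)/ω_s'(s_j²), where ω_s(ξ) = ∏_k (ξ − s_k²) and ω_t(ξ) = ∏_k (ξ − t_k²). -/
open Finset Polynomial

theorem secular_solution (mh : ℕ) (s t : Fin mh → ℝ)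
    (hs_dec : ∀ i j : Fin mh, i < j → s j < s i)
    (hs_nonneg : ∀ i, 0 ≤ s i)
    (hts : ∀ i, s i < t i)
    (hst : ∀ i : Fin mh, (h : (i : ℕ) + 1 < mh) → t ⟨(i : ℕ) + 1, h⟩ < s i)
    (r : Fin mh → ℝ) (hr : ∀ j, 0 < r j) :
    (∀ j, ∑ k, r k ^ 2 / (t j ^ 2 - s k ^ 2) = 1) ↔
      (∀ j, r j ^ 2 =
        -(∏ k, (s j ^ 2 - t k ^ 2)) /
          deriv (fun ξ : ℝ => ∏ k, (ξ - s k ^ 2)) (s j ^ 2)) := by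
  classical
  rcases Nat.eq_zero_or_pos mh with hmh | hmh
  · subst hmh
    constructor <;> intro _ j <;> exact j.elim0
  -- basic real-number facts
  have htpos : ∀ i, 0 < t i := fun i => (hs_nonneg i).trans_lt (hts i)
  have htlt : ∀ i j : Fin mh, i < j → t j < s i := by
    intro i j hij
    have hij' : (i : ℕ) < (j : ℕ) := hij
    have hj1 : 1 ≤ (j : ℕ) := by omega
    set j' : Fin mh := ⟨(j : ℕ) - 1, by omega⟩ with hj'
    have h2 : (j' : ℕ) + 1 < mh := by simp [hj']; omega
    have h1 : t j < s j' := by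
      have h3 := hst j' h2
      have h4 : (⟨(j' : ℕ) + 1, h2⟩ : Fin mh) = j := by
        apply Fin.ext; simp [hj']; omega
      rwa [h4] at h3
    have h3 : s j' ≤ s i := by
      rcases eq_or_lt_of_le (show i ≤ j' by rw [Fin.le_def]; simp [hj']; omega) with h | h
      · rw [h]
      · exact (hs_dec i j' h).le
    exact h1.trans_le h3
  have hsqlt : ∀ {x y : ℝ}, 0 ≤ x → x < y → x ^ 2 < y ^ 2 := by
    intro x y hx hxy; nlinarith
  have ha_lt : ∀ i j : Fin mh, i < j → s j ^ 2 < s i ^ 2 :=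
    fun i j h => hsqlt (hs_nonneg j) (hs_dec i j h)
  have hb_lt : ∀ i j : Fin mh, i < j → t j ^ 2 < t i ^ 2 :=
    fun i j h => hsqlt (htpos j).le ((htlt i j h).trans (hts i))
  have ha_inj : Function.Injective (fun k : Fin mh => s k ^ 2) := by
    intro i j hij
    simp only at hij
    rcases lt_trichotomy i j with h | h | h
    · exact absurd hij (ha_lt i j h).ne'
    · exact h
    · exact absurd hij (ha_lt j i h).ne
  have hb_inj : Function.Injective (fun k : Fin mh => t k ^ 2) := by
    intro i j hij
    simp only at hij
    rcases lt_trichotomy i j with h | h | h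
    · exact absurd hij (hb_lt i j h).ne'
    · exact h
    · exact absurd hij (hb_lt j i h).ne
  have hba : ∀ j k, t j ^ 2 ≠ s k ^ 2 := by
    intro j k
    rcases lt_or_ge k j with h | h
    · exact (hsqlt (htpos j).le (htlt k j h)).ne
    · have h1 : s k ≤ s j := by
        rcases eq_or_lt_of_le h with h' | h'
        · rw [h']
        · exact (hs_dec j k h').le
      exact (hsqlt (hs_nonneg k) (h1.trans_lt (hts j))).ne'
  have hbane : ∀ j k, t j ^ 2 - s k ^ 2 ≠ 0 := fun j k => sub_ne_zero.mpr (hba j k)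
  have hane : ∀ (j l : Fin mh), l ≠ j → s j ^ 2 - s l ^ 2 ≠ 0 := by
    intro j l h
    exact sub_ne_zero.mpr fun e => h (ha_inj e).symm
  -- the polynomials
  set Q : ℝ[X] := ∏ k, (X - C (t k ^ 2)) with hQdef
  set Pa : ℝ[X] := ∏ k, (X - C (s k ^ 2)) with hPadef
  set Sp : ℝ[X] := ∑ k, C (r k ^ 2) * ∏ l ∈ univ.erase k, (X - C (s l ^ 2)) with hSdef
  have hQev : ∀ x : ℝ, Q.eval x = ∏ k, (x - t k ^ 2) := by
    intro x; simp [hQdef, eval_prod]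
  have hPaev : ∀ x : ℝ, Pa.eval x = ∏ k, (x - s k ^ 2) := by
    intro x; simp [hPadef, eval_prod]
  have hSev : ∀ x : ℝ, Sp.eval x = ∑ k, r k ^ 2 * ∏ l ∈ univ.erase k, (x - s l ^ 2) := by
    intro x; simp [hSdef, eval_finset_sum, eval_prod]
  -- derivative computation
  have hD : ∀ j, deriv (fun ξ : ℝ => ∏ k, (ξ - s k ^ 2)) (s j ^ 2)
      = ∏ l ∈ univ.erase j, (s j ^ 2 - s l ^ 2) := by
    intro j
    have hfun : (fun ξ : ℝ => ∏ k, (ξ - s k ^ 2)) = fun ξ => Pa.eval ξ := by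
      funext x; exact (hPaev x).symm
    rw [hfun, Polynomial.deriv]
    have hPa2 : Pa = (Multiset.map (fun x => X - C x)
        (Multiset.map (fun k => s k ^ 2) univ.val)).prod := by
      rw [hPadef, Finset.prod_eq_multiset_prod, Multiset.map_map]
      rfl
    have hmem : s j ^ 2 ∈ Multiset.map (fun k => s k ^ 2) univ.val :=
      Multiset.mem_map.mpr ⟨j, by simp⟩
    rw [hPa2, eval_multiset_prod_X_sub_C_derivative hmem,
      ← Multiset.map_erase _ ha_inj, Multiset.map_map,
      Finset.prod_eq_multiset_prod]
    rfl
  have hDne : ∀ j, ∏ l ∈ univ.erase j, (s j ^ 2 - s l ^ 2) ≠ 0 := fun j =>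
    Finset.prod_ne_zero_iff.mpr fun l hl => hane j l (Finset.ne_of_mem_erase hl)
  -- degrees
  have hQmon : Q.Monic := monic_prod_of_monic _ _ fun k _ => monic_X_sub_C _
  have hPamon : Pa.Monic := monic_prod_of_monic _ _ fun k _ => monic_X_sub_C _
  have hQdeg : Q.natDegree = mh := by
    rw [hQdef, Polynomial.natDegree_prod _ _ fun k _ => X_sub_C_ne_zero _]
    simp only [natDegree_X_sub_C]
    simp
  have hPadeg : Pa.natDegree = mh := by
    rw [hPadef, Polynomial.natDegree_prod _ _ fun k _ => X_sub_C_ne_zero _]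
    simp only [natDegree_X_sub_C]
    simp
  have hSpdeg : Sp.natDegree ≤ mh - 1 := by
    apply natDegree_sum_le_of_forall_le
    intro k _
    refine le_trans (natDegree_mul_le) ?_
    rw [natDegree_C, zero_add]
    refine le_trans (natDegree_prod_le _ _) ?_
    refine le_of_eq ?_
    rw [Finset.sum_congr rfl fun l _ => natDegree_X_sub_C (s l ^ 2)]
    simp [Finset.card_erase_of_mem]
  have hQPdeg : (Q - Pa).natDegree < mh := by
    by_cases h : Q - Pa = 0
    · rw [h]; simpa using hmh
    · rw [Polynomial.natDegree_lt_iff_degree_lt h]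
      have hd : Q.degree = Pa.degree := by
        rw [Polynomial.degree_eq_natDegree hQmon.ne_zero,
          Polynomial.degree_eq_natDegree hPamon.ne_zero, hQdeg, hPadeg]
      calc (Q - Pa).degree < Q.degree :=
            degree_sub_lt hd hQmon.ne_zero (hQmon.leadingCoeff.trans hPamon.leadingCoeff.symm)
        _ = (mh : WithBot ℕ) := by
            rw [Polynomial.degree_eq_natDegree hQmon.ne_zero, hQdeg]
  have hPdeg : (Q - Pa + Sp).natDegree < mh := by
    refine lt_of_le_of_lt (natDegree_add_le _ _) ?_
    rw [max_lt_iff]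
    exact ⟨hQPdeg, lt_of_le_of_lt hSpdeg (by omega)⟩
  -- shared evaluation facts
  have hQb : ∀ i, Q.eval (t i ^ 2) = 0 := by
    intro i; rw [hQev]
    exact Finset.prod_eq_zero (mem_univ i) (by ring)
  have hPaa : ∀ j, Pa.eval (s j ^ 2) = 0 := by
    intro j; rw [hPaev]
    exact Finset.prod_eq_zero (mem_univ j) (by ring)
  have hSa : ∀ j, Sp.eval (s j ^ 2) = r j ^ 2 * ∏ l ∈ univ.erase j, (s j ^ 2 - s l ^ 2) := by
    intro j
    rw [hSev, Finset.sum_eq_single j]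
    · intro k _ hkj
      apply mul_eq_zero_of_right
      exact Finset.prod_eq_zero (Finset.mem_erase.mpr ⟨Ne.symm hkj, mem_univ j⟩) (by ring)
    · intro h; exact absurd (mem_univ j) h
  constructor
  · -- secular equations imply the formula
    intro heq j
    have hP : Q - Pa + Sp = 0 := by
      apply Polynomial.eq_zero_of_natDegree_lt_card_of_eval_eq_zero _ hb_inj
      · intro i
        simp only [eval_add, eval_sub]
        have h2 : Pa.eval (t i ^ 2) = Sp.eval (t i ^ 2) := by
          rw [hPaev, hSev]
          calc ∏ k, (t i ^ 2 - s k ^ 2)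
              = (∑ k, r k ^ 2 / (t i ^ 2 - s k ^ 2)) * ∏ k, (t i ^ 2 - s k ^ 2) := by
                rw [heq i, one_mul]
            _ = ∑ k, r k ^ 2 * ∏ l ∈ univ.erase k, (t i ^ 2 - s l ^ 2) := by
                rw [Finset.sum_mul]
                refine Finset.sum_congr rfl fun k _ => ?_
                rw [← Finset.mul_prod_erase univ _ (mem_univ k), ← mul_assoc,
                  div_mul_cancel₀ _ (hbane i k)]
        rw [hQb i, h2]; ring
      · rw [Fintype.card_fin]; exact hPdeg
    have h0 := congrArg (Polynomial.eval (s j ^ 2)) hP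
    simp only [eval_add, eval_sub, eval_zero] at h0
    rw [hQev, hPaa j, hSa j] at h0
    rw [hD j, eq_div_iff (hDne j)]
    linarith [h0]
  · -- the formula implies the secular equations
    intro hfor i
    have hP : Q - Pa + Sp = 0 := by
      apply Polynomial.eq_zero_of_natDegree_lt_card_of_eval_eq_zero _ ha_inj
      · intro j
        simp only [eval_add, eval_sub]
        have h3 := hfor j
        rw [hD j] at h3
        have h4 : r j ^ 2 * ∏ l ∈ univ.erase j, (s j ^ 2 - s l ^ 2)
            = -(∏ k, (s j ^ 2 - t k ^ 2)) := by
          rw [h3, div_mul_cancel₀ _ (hDne j)]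
        rw [hQev, hPaa j, hSa j]
        linarith [h4]
      · rw [Fintype.card_fin]; exact hPdeg
    have h0 := congrArg (Polynomial.eval (t i ^ 2)) hP
    simp only [eval_add, eval_sub, eval_zero] at h0
    rw [hQb i, hPaev, hSev] at h0
    have hprodne : ∏ k, (t i ^ 2 - s k ^ 2) ≠ 0 :=
      Finset.prod_ne_zero_iff.mpr fun k _ => hbane i k
    have hsum : ∑ k, r k ^ 2 / (t i ^ 2 - s k ^ 2)
        = (∑ k, r k ^ 2 * ∏ l ∈ univ.erase k, (t i ^ 2 - s l ^ 2))
          / ∏ k, (t i ^ 2 - s k ^ 2) := by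
      rw [Finset.sum_div]
      refine Finset.sum_congr rfl fun k _ => ?_
      rw [← Finset.mul_prod_erase univ _ (mem_univ k)]
      exact (mul_div_mul_right _ _
        (Finset.prod_ne_zero_iff.mpr fun l _ => hbane i l)).symm
    rw [hsum, div_eq_one_iff_eq hprodne]
    linarith [h0]
end

section
/- Let τ₁,...,τ_{2m−1} be independent random variables with τ_k ~ χ_k, and let τ_{2m} be independent of these with arbitrary distribution. Define the m×(m+1) bidiagonal matrix B with diagonal entries τ_{2m}, τ_{2m−2}, ..., τ₂ and superdiagonal entries τ_{2m−1}, τ_{2m−3}, ..., τ₁. Then the almost surely unique positive solution ξ₂,...,ξ_{2m−1}, ξ_{2m+1} of the system ξ_{2k+1}² + ξ_{2k−2}² = τ_{2k}² + τ_{2k−1}² (k = 1,...,m, with ξ₀ = 0) and ξ_{2k+1}ξ_{2k} = τ_{2k+1}τ_{2k} (k = 1,...,m−1) yields variables ξ₂,...,ξ_{2m−1} that are mutually independent, distributed as χ₂,...,χ_{2m−1}, and independent of τ_{2m}; moreover ξ_{2m+1} = √(ξ₁² + τ_{2m}²) where ξ₁ = √(τ_{2m−1}² − ξ_{2m−2}²)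 is distributed as χ₁ and independent of ξ₂,...,ξ_{2m−1} and of τ_{2m}. -/
open MeasureTheory ProbabilityTheory

/-- The chi distribution with `k` degrees of freedom: the law of the square root
of a chi-squared (gamma with shape `k/2`, rate `1/2`) random variable. -/
noncomputable def chiMeasure (k : ℕ) : Measure ℝ :=
  (gammaMeasure ((k : ℝ) / 2) (1 / 2)).map Real.sqrt

open Real Set
open scoped ENNReal NNReal

namespace RQAux


noncomputable section

lemma gammaMeasure_Iic_zero (a r : ℝ) : gammaMeasure a r (Set.Iic 0) = 0 := by
  rw [gammaMeasure, withDensity_apply _ measurableSet_Iic,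
    lintegral_Iic_eq_lintegral_Iio_add_Icc _ le_rfl,
    lintegral_gammaPDF_of_nonpos le_rfl, zero_add]
  exact setLIntegral_measure_zero _ _ (by simp)

lemma gammaMeasure_ae_pos (a r : ℝ) : ∀ᵐ x ∂(gammaMeasure a r), 0 < x := by
  rw [ae_iff]
  refine measure_mono_null (fun x hx => ?_) (gammaMeasure_Iic_zero a r)
  simpa using hx

lemma measurable_gammaPDF (a r : ℝ) : Measurable (gammaPDF a r) :=
  (measurable_gammaPDFReal a r).ennreal_ofReal

/-- `T (x, y) = (x + y, x / (x + y))`. -/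
def Tmap : ℝ × ℝ → ℝ × ℝ := fun p => (p.1 + p.2, p.1 / (p.1 + p.2))

lemma measurable_Tmap : Measurable Tmap :=
  (measurable_fst.add measurable_snd).prodMk
    (measurable_fst.div (measurable_fst.add measurable_snd))

/-- Unnormalized-looking (but in fact normalized) beta density. -/
def betaPDF (a b u : ℝ) : ℝ≥0∞ :=
  ENNReal.ofReal (if 0 ≤ u ∧ u ≤ 1 then
    Real.Gamma (a + b) / (Real.Gamma a * Real.Gamma b) * (u ^ (a - 1) * (1 - u) ^ (b - 1))
      else 0)

lemma measurable_betaPDF (a b : ℝ) : Measurable (betaPDF a b) := by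
  apply Measurable.ennreal_ofReal
  refine Measurable.ite ?_ ?_ measurable_const
  · exact measurableSet_Icc (a := (0:ℝ)) (b := 1)
  · fun_prop

def betaMeasure (a b : ℝ) : Measure ℝ := volume.withDensity (betaPDF a b)

instance (a b : ℝ) : SigmaFinite (betaMeasure a b) :=
  SigmaFinite.withDensity_of_ne_top' (fun _ => ENNReal.ofReal_ne_top)

lemma density_identity {a b r : ℝ} (ha : 0 < a) (hb : 0 < b) (hr : 0 < r)
    {s u : ℝ} (hs : 0 < s) (hu0 : 0 < u) (hu1 : u < 1) :
    ENNReal.ofReal s * (gammaPDF a r (s * u) * gammaPDF b r (s - s * u)) =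
      gammaPDF (a + b) r s * betaPDF a b u := by
  have h1u : (0:ℝ) < 1 - u := by linarith
  have hsu : (0:ℝ) ≤ s * u := by positivity
  have hssu : (0:ℝ) ≤ s - s * u := by nlinarith
  rw [gammaPDF_of_nonneg hsu, gammaPDF_of_nonneg hssu, gammaPDF_of_nonneg hs.le,
    betaPDF, if_pos ⟨hu0.le, hu1.le⟩,
    ← ENNReal.ofReal_mul (by positivity), ← ENNReal.ofReal_mul (by positivity),
    ← ENNReal.ofReal_mul (by positivity)]
  congr 1
  have hGa := Real.Gamma_pos_of_pos ha
  have hGb := Real.Gamma_pos_of_pos hb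
  have hGab := Real.Gamma_pos_of_pos (by linarith : (0:ℝ) < a + b)
  have e1 : s - s * u = s * (1 - u) := by ring
  rw [e1]
  have e2 : (s * u) ^ (a - 1) = s ^ (a - 1) * u ^ (a - 1) := Real.mul_rpow hs.le hu0.le
  have e3 : (s * (1 - u)) ^ (b - 1) = s ^ (b - 1) * (1 - u) ^ (b - 1) :=
    Real.mul_rpow hs.le h1u.le
  have e4 : r ^ (a + b) = r ^ a * r ^ b := Real.rpow_add hr a b
  have e5 : s ^ (a + b - 1) = s ^ (a - 1) * s ^ (b - 1) * s := by
    rw [← Real.rpow_add hs, ← Real.rpow_add_one hs.ne']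
    ring_nf
  have e6 : Real.exp (-(r * (s * u))) * Real.exp (-(r * (s * (1 - u)))) =
      Real.exp (-(r * s)) := by
    rw [← Real.exp_add]
    ring_nf
  rw [e2, e3, e4, e5]
  field_simp
  rw [← Real.exp_add]
  congr 1
  ring




lemma betaPDF_of_neg {a b u : ℝ} (hu : u < 0) : betaPDF a b u = 0 := by
  rw [betaPDF, if_neg (by intro h; linarith [h.1]), ENNReal.ofReal_zero]

lemma betaPDF_of_gt {a b u : ℝ} (hu : 1 < u) : betaPDF a b u = 0 := by
  rw [betaPDF, if_neg (by intro h; linarith [h.2]), ENNReal.ofReal_zero]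

lemma indicator_prod_eq {A B : Set ℝ} (x y : ℝ) :
    (Tmap ⁻¹' (A ×ˢ B)).indicator (1 : ℝ × ℝ → ℝ≥0∞) (x, y)
      = A.indicator 1 (x + y) * B.indicator 1 (x / (x + y)) := by
  by_cases hA : x + y ∈ A <;> by_cases hB : x / (x + y) ∈ B <;>
    simp [Tmap, Set.indicator, Set.mem_prod, hA, hB]

lemma prod_gamma_apply {a b r : ℝ} (ha : 0 < a) (hb : 0 < b) (hr : 0 < r)
    {S : Set (ℝ × ℝ)} (hS : MeasurableSet S) :
    ((gammaMeasure a r).prod (gammaMeasure b r)) S =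
      ∫⁻ x, gammaPDF a r x * ∫⁻ y, gammaPDF b r y * S.indicator 1 (x, y) ∂volume ∂volume := by
  haveI : IsProbabilityMeasure (gammaMeasure a r) := isProbabilityMeasure_gammaMeasure ha hr
  haveI : IsProbabilityMeasure (gammaMeasure b r) := isProbabilityMeasure_gammaMeasure hb hr
  have hind : Measurable (S.indicator (1 : ℝ × ℝ → ℝ≥0∞)) := measurable_one.indicator hS
  have hinner : ∀ x, (gammaMeasure b r) (Prod.mk x ⁻¹' S)
      = ∫⁻ y, gammaPDF b r y * S.indicator 1 (x, y) ∂volume := by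
    intro x
    have hpre : MeasurableSet (Prod.mk x ⁻¹' S) := measurable_prodMk_left hS
    rw [← lintegral_indicator_one hpre, gammaMeasure,
      lintegral_withDensity_eq_lintegral_mul _ (measurable_gammaPDF b r)
        (measurable_one.indicator hpre)]
    refine lintegral_congr fun y => ?_
    by_cases h : (x, y) ∈ S <;> simp [Set.indicator, h]
  rw [Measure.prod_apply hS]
  simp_rw [hinner]
  have hun : Measurable (fun p : ℝ × ℝ => gammaPDF b r p.2 * S.indicator 1 p) :=
    ((measurable_gammaPDF b r).comp measurable_snd).mul hind
  rw [gammaMeasure, lintegral_withDensity_eq_lintegral_mul _ (measurable_gammaPDF a r)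
    hun.lintegral_prod_right']
  rfl

lemma inner_eval {a b r : ℝ} (ha : 0 < a) (hb : 0 < b) (hr : 0 < r) {A B : Set ℝ}
    (hA : MeasurableSet A) (hB : MeasurableSet B) {s : ℝ} (hs : s ≠ 0) :
    (∫⁻ x, gammaPDF a r x *
        (A.indicator 1 s * B.indicator 1 (x / s) * gammaPDF b r (s - x)) ∂volume)
      = A.indicator 1 s * gammaPDF (a + b) r s *
          ∫⁻ u, B.indicator 1 u * betaPDF a b u ∂volume := by
  have hmB : Measurable (B.indicator (1 : ℝ → ℝ≥0∞)) := measurable_const.indicator hB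
  have hg : Measurable fun x => gammaPDF a r x *
      (A.indicator 1 s * B.indicator 1 (x / s) * gammaPDF b r (s - x)) := by
    refine (measurable_gammaPDF a r).mul ?_
    exact (measurable_const.mul (hmB.comp (measurable_id.div_const s))).mul
      ((measurable_gammaPDF b r).comp (measurable_const.sub measurable_id))
  rcases lt_or_gt_of_ne hs with hneg | hpos
  · have h0 : ∀ᵐ x : ℝ ∂volume, x ≠ 0 := by
      refine measure_eq_zero_iff_ae_notMem.mp ?_
      exact measure_mono_null (fun x hx => hx) (measure_singleton (0 : ℝ))
    have hz : (fun x => gammaPDF a r x *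
        (A.indicator 1 s * B.indicator 1 (x / s) * gammaPDF b r (s - x)))
          =ᵐ[volume] fun _ => 0 := by
      refine h0.mono fun x hx => ?_
      show gammaPDF a r x * (A.indicator 1 s * B.indicator 1 (x / s) * gammaPDF b r (s - x)) = 0
      rcases lt_or_gt_of_ne hx with h | h
      · rw [gammaPDF_of_neg h, zero_mul]
      · rw [gammaPDF_of_neg (by linarith : s - x < 0), mul_zero, mul_zero]
    rw [lintegral_congr_ae hz, lintegral_zero, gammaPDF_of_neg hneg, mul_zero, zero_mul]
  · set g := fun x => gammaPDF a r x *
      (A.indicator 1 s * B.indicator 1 (x / s) * gammaPDF b r (s - x)) with hgdef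
    have hsub : ∫⁻ x, g x ∂volume = ENNReal.ofReal s * ∫⁻ u, g (s * u) ∂volume := by
      rw [← lintegral_map hg (measurable_const_mul s), Real.map_volume_mul_left (ne_of_gt hpos),
        lintegral_smul_measure, smul_eq_mul, abs_inv, abs_of_pos hpos, ← mul_assoc,
        ← ENNReal.ofReal_mul hpos.le, mul_inv_cancel₀ (ne_of_gt hpos), ENNReal.ofReal_one,
        one_mul]
    rw [hsub, ← lintegral_const_mul _
      (show Measurable fun u => g (s * u) from hg.comp (measurable_const_mul s))]
    have hu01 : ∀ᵐ u : ℝ ∂volume, u ≠ 0 ∧ u ≠ 1 := by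
      have h01 : volume ({0, 1} : Set ℝ) = 0 :=
        measure_union_null (measure_singleton 0) (measure_singleton 1)
      refine (measure_eq_zero_iff_ae_notMem.mp h01).mono fun u hu => ?_
      simp only [Set.mem_insert_iff, Set.mem_singleton_iff] at hu
      exact ⟨fun h => hu (Or.inl h), fun h => hu (Or.inr h)⟩
    have hptwise : (fun u => ENNReal.ofReal s * g (s * u)) =ᵐ[volume]
        fun u => (A.indicator 1 s * gammaPDF (a + b) r s) *
          (B.indicator 1 u * betaPDF a b u) := by
      refine hu01.mono fun u ⟨hu0, hu1⟩ => ?_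
      simp only [hgdef]
      rw [mul_div_cancel_left₀ _ (ne_of_gt hpos)]
      rcases lt_or_gt_of_ne hu0 with hult | hugt
      · rw [gammaPDF_of_neg (by nlinarith : s * u < 0), zero_mul, mul_zero,
          betaPDF_of_neg hult, mul_zero, mul_zero]
      rcases lt_or_gt_of_ne hu1 with hult1 | hugt1
      · have := density_identity ha hb hr hpos hugt hult1
        calc ENNReal.ofReal s * (gammaPDF a r (s * u) *
              (A.indicator 1 s * B.indicator 1 u * gammaPDF b r (s - s * u)))
            = (A.indicator 1 s * B.indicator 1 u) *
              (ENNReal.ofReal s * (gammaPDF a r (s * u) * gammaPDF b r (s - s * u))) := by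
              ring
          _ = (A.indicator 1 s * gammaPDF (a + b) r s) *
              (B.indicator 1 u * betaPDF a b u) := by rw [this]; ring
      · rw [gammaPDF_of_neg (by nlinarith : s - s * u < 0), mul_zero, mul_zero, mul_zero,
          betaPDF_of_gt hugt1, mul_zero, mul_zero]
    rw [lintegral_congr_ae hptwise,
      lintegral_const_mul _ (f := fun u => B.indicator 1 u * betaPDF a b u) (hmB.mul (measurable_betaPDF a b))]

theorem map_Tmap_gamma {a b r : ℝ} (ha : 0 < a) (hb : 0 < b) (hr : 0 < r) :
    ((gammaMeasure a r).prod (gammaMeasure b r)).map Tmap =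
      (gammaMeasure (a + b) r).prod (betaMeasure a b) := by
  haveI : IsProbabilityMeasure (gammaMeasure (a + b) r) :=
    isProbabilityMeasure_gammaMeasure (by linarith) hr
  haveI : SigmaFinite (betaMeasure a b) :=
    SigmaFinite.withDensity_of_ne_top' (fun _ => ENNReal.ofReal_ne_top)
  refine (Measure.prod_eq fun A B hA hB => ?_).symm
  have hmA : Measurable (A.indicator (1 : ℝ → ℝ≥0∞)) := measurable_const.indicator hA
  have hmB : Measurable (B.indicator (1 : ℝ → ℝ≥0∞)) := measurable_const.indicator hB
  have hfa := measurable_gammaPDF a r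
  have hfb := measurable_gammaPDF b r
  have hfab := measurable_gammaPDF (a + b) r
  rw [Measure.map_apply measurable_Tmap (hA.prod hB),
    prod_gamma_apply ha hb hr (measurable_Tmap (hA.prod hB))]
  have hmF : ∀ x : ℝ, Measurable fun s =>
      A.indicator 1 s * B.indicator 1 (x / s) * gammaPDF b r (s - x) := fun x =>
    (hmA.mul (hmB.comp (measurable_const.div measurable_id))).mul
      (hfb.comp (measurable_id.sub measurable_const))
  have step1 : ∀ x : ℝ, (∫⁻ y, gammaPDF b r y *
      (Tmap ⁻¹' (A ×ˢ B)).indicator 1 (x, y) ∂volume)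
      = ∫⁻ s, A.indicator 1 s * B.indicator 1 (x / s) * gammaPDF b r (s - x) ∂volume := by
    intro x
    calc (∫⁻ y, gammaPDF b r y * (Tmap ⁻¹' (A ×ˢ B)).indicator 1 (x, y) ∂volume)
        = ∫⁻ y, (fun s => A.indicator 1 s * B.indicator 1 (x / s) * gammaPDF b r (s - x))
            (x + y) ∂volume := by
          refine lintegral_congr fun y => ?_
          rw [indicator_prod_eq]
          show gammaPDF b r y * _ = _ * _ * gammaPDF b r (x + y - x)
          rw [add_sub_cancel_left]
          ring
      _ = _ := by rw [← lintegral_map (hmF x) (measurable_const_add x),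
            map_add_left_eq_self volume x]
  simp_rw [step1]
  have swap : (∫⁻ x, gammaPDF a r x * ∫⁻ s,
      A.indicator 1 s * B.indicator 1 (x / s) * gammaPDF b r (s - x) ∂volume ∂volume)
      = ∫⁻ s, ∫⁻ x, gammaPDF a r x *
          (A.indicator 1 s * B.indicator 1 (x / s) * gammaPDF b r (s - x)) ∂volume ∂volume := by
    rw [← lintegral_lintegral_swap]
    · refine lintegral_congr fun x => ?_
      rw [← lintegral_const_mul _ (hmF x)]
    · apply Measurable.aemeasurable
      apply Measurable.mul
      · exact hfa.comp measurable_fst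
      · refine Measurable.mul ?_ ?_
        · exact (hmA.comp measurable_snd).mul
            (hmB.comp (measurable_fst.div measurable_snd))
        · exact hfb.comp (measurable_snd.sub measurable_fst)
  rw [swap]
  have h0 : ∀ᵐ s : ℝ ∂volume, s ≠ 0 := by
    refine measure_eq_zero_iff_ae_notMem.mp ?_
    exact measure_mono_null (fun x hx => hx) (measure_singleton (0 : ℝ))
  rw [lintegral_congr_ae (h0.mono fun s hs => inner_eval ha hb hr hA hB hs)]
  rw [lintegral_mul_const _ (f := fun s => A.indicator 1 s * gammaPDF (a + b) r s) (hmA.mul hfab)]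
  congr 1
  · rw [gammaMeasure, withDensity_apply _ hA, ← lintegral_indicator hA]
    refine lintegral_congr fun s => ?_
    by_cases h : s ∈ A <;> simp [Set.indicator, h]
  · rw [betaMeasure, withDensity_apply _ hB, ← lintegral_indicator hB]
    refine lintegral_congr fun u => ?_
    by_cases h : u ∈ B <;> simp [Set.indicator, h]


def Umap : ℝ × ℝ → ℝ × ℝ := fun p => (p.1 * p.2, p.1 * (1 - p.2))

lemma measurable_Umap : Measurable Umap :=
  (measurable_fst.mul measurable_snd).prodMk
    (measurable_fst.mul (measurable_const.sub measurable_snd))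

lemma prod_gamma_ae_pos {a b r : ℝ} (ha : 0 < a) (hb : 0 < b) (hr : 0 < r) :
    ∀ᵐ p : ℝ × ℝ ∂((gammaMeasure a r).prod (gammaMeasure b r)), 0 < p.1 ∧ 0 < p.2 := by
  haveI : IsProbabilityMeasure (gammaMeasure a r) := isProbabilityMeasure_gammaMeasure ha hr
  haveI : IsProbabilityMeasure (gammaMeasure b r) := isProbabilityMeasure_gammaMeasure hb hr
  rw [ae_iff]
  have hnull : ((gammaMeasure a r).prod (gammaMeasure b r))
      ((Iic 0 ×ˢ univ) ∪ (univ ×ˢ Iic 0)) = 0 := by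
    refine measure_union_null ?_ ?_
    · rw [Measure.prod_prod, gammaMeasure_Iic_zero, zero_mul]
    · rw [Measure.prod_prod, gammaMeasure_Iic_zero, mul_zero]
  refine measure_mono_null (fun p hp => ?_) hnull
  simp only [mem_setOf_eq, not_and_or, not_lt] at hp
  rcases hp with h | h
  · exact Or.inl ⟨h, mem_univ _⟩
  · exact Or.inr ⟨mem_univ _, h⟩

lemma map_Umap_gamma {a b r : ℝ} (ha : 0 < a) (hb : 0 < b) (hr : 0 < r) :
    ((gammaMeasure (a + b) r).prod (betaMeasure a b)).map Umap =
      (gammaMeasure a r).prod (gammaMeasure b r) := by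
  haveI : IsProbabilityMeasure (gammaMeasure a r) := isProbabilityMeasure_gammaMeasure ha hr
  haveI : IsProbabilityMeasure (gammaMeasure b r) := isProbabilityMeasure_gammaMeasure hb hr
  rw [← map_Tmap_gamma ha hb hr,
    Measure.map_map measurable_Umap measurable_Tmap]
  have hae : (Umap ∘ Tmap) =ᵐ[(gammaMeasure a r).prod (gammaMeasure b r)] id := by
    refine (prod_gamma_ae_pos ha hb hr).mono fun p hp => ?_
    obtain ⟨u, v⟩ := p
    obtain ⟨h1, h2⟩ := hp
    simp only at h1 h2
    have hsum : u + v ≠ 0 := by positivity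
    show ((u + v) * (u / (u + v)), (u + v) * (1 - u / (u + v))) = (u, v)
    rw [Prod.mk.injEq]
    refine ⟨by field_simp, ?_⟩
    field_simp
    try ring
  rw [Measure.map_congr hae, Measure.map_id]

/-- The gamma-level triple map, defined as a composition. -/
def Ggam : ℝ × (ℝ × ℝ) → ℝ × (ℝ × ℝ) :=
  ⇑(MeasurableEquiv.prodAssoc : (ℝ × ℝ) × ℝ ≃ᵐ ℝ × (ℝ × ℝ)) ∘ Prod.swap ∘
    Prod.map id (Umap ∘ Prod.swap) ∘
    ⇑(MeasurableEquiv.prodAssoc : (ℝ × ℝ) × ℝ ≃ᵐ ℝ × (ℝ × ℝ)) ∘ Prod.map Tmap id ∘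
    ⇑(MeasurableEquiv.prodAssoc : (ℝ × ℝ) × ℝ ≃ᵐ ℝ × (ℝ × ℝ)).symm

lemma Ggam_apply {x y z : ℝ} (h : x + y ≠ 0) :
    Ggam (x, (y, z)) = (z * (x / (x + y)), (z * (y / (x + y)), x + y)) := by
  have h2 : Ggam (x, (y, z)) = (z * (x / (x + y)), (z * (1 - x / (x + y)), x + y)) := rfl
  rw [h2]
  have h3 : 1 - x / (x + y) = y / (x + y) := by
    rw [one_sub_div h, add_sub_cancel_left]
  rw [h3]

lemma measurable_Ggam : Measurable Ggam := by
  unfold Ggam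
  refine (MeasurableEquiv.measurable _).comp ?_
  refine measurable_swap.comp ?_
  refine (Measurable.prodMap measurable_id (measurable_Umap.comp measurable_swap)).comp ?_
  refine (MeasurableEquiv.measurable _).comp ?_
  exact (Measurable.prodMap measurable_Tmap measurable_id).comp
    (MeasurableEquiv.measurable _)

theorem map_Ggam_gamma {a b r : ℝ} (ha : 0 < a) (hb : 0 < b) (hr : 0 < r) :
    ((gammaMeasure a r).prod ((gammaMeasure b r).prod (gammaMeasure (a + b) r))).map Ggam =
      (gammaMeasure a r).prod ((gammaMeasure b r).prod (gammaMeasure (a + b) r)) := by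
  haveI : IsProbabilityMeasure (gammaMeasure a r) := isProbabilityMeasure_gammaMeasure ha hr
  haveI : IsProbabilityMeasure (gammaMeasure b r) := isProbabilityMeasure_gammaMeasure hb hr
  haveI : IsProbabilityMeasure (gammaMeasure (a + b) r) :=
    isProbabilityMeasure_gammaMeasure (by linarith) hr
  set γa := gammaMeasure a r
  set γb := gammaMeasure b r
  set γab := gammaMeasure (a + b) r
  set β := betaMeasure a b
  have m1 : Measurable (⇑(MeasurableEquiv.prodAssoc : (ℝ × ℝ) × ℝ ≃ᵐ ℝ × (ℝ × ℝ)).symm) :=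
    MeasurableEquiv.measurable _
  have m2 : Measurable (Prod.map Tmap (id : ℝ → ℝ)) :=
    measurable_Tmap.prodMap measurable_id
  have m3 : Measurable (⇑(MeasurableEquiv.prodAssoc : (ℝ × ℝ) × ℝ ≃ᵐ ℝ × (ℝ × ℝ))) :=
    MeasurableEquiv.measurable _
  have m4 : Measurable (Prod.map (id : ℝ → ℝ) (Umap ∘ Prod.swap)) :=
    measurable_id.prodMap (measurable_Umap.comp measurable_swap)
  have m5 : Measurable (Prod.swap : ℝ × (ℝ × ℝ) → (ℝ × ℝ) × ℝ) := measurable_swap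
  have s1 : (γa.prod (γb.prod γab)).map
      (⇑(MeasurableEquiv.prodAssoc : (ℝ × ℝ) × ℝ ≃ᵐ ℝ × (ℝ × ℝ)).symm) =
      (γa.prod γb).prod γab := by
    rw [← Measure.prodAssoc_prod, MeasurableEquiv.map_symm_map]
  have s2 : ((γa.prod γb).prod γab).map (Prod.map Tmap id) = (γab.prod β).prod γab := by
    rw [← Measure.map_prod_map _ _ measurable_Tmap measurable_id,
      map_Tmap_gamma ha hb hr, Measure.map_id]
  have s3 : ((γab.prod β).prod γab).map
      (⇑(MeasurableEquiv.prodAssoc : (ℝ × ℝ) × ℝ ≃ᵐ ℝ × (ℝ × ℝ))) =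
      γab.prod (β.prod γab) := Measure.prodAssoc_prod
  have s4 : (γab.prod (β.prod γab)).map (Prod.map id (Umap ∘ Prod.swap)) =
      γab.prod (γa.prod γb) := by
    rw [← Measure.map_prod_map _ _ measurable_id (measurable_Umap.comp measurable_swap),
      Measure.map_id, ← Measure.map_map measurable_Umap measurable_swap,
      Measure.prod_swap, map_Umap_gamma ha hb hr]
  have s5 : (γab.prod (γa.prod γb)).map Prod.swap = (γa.prod γb).prod γab :=
    Measure.prod_swap
  have s6 : ((γa.prod γb).prod γab).map
      (⇑(MeasurableEquiv.prodAssoc : (ℝ × ℝ) × ℝ ≃ᵐ ℝ × (ℝ × ℝ))) =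
      γa.prod (γb.prod γab) := Measure.prodAssoc_prod
  calc (γa.prod (γb.prod γab)).map Ggam
      = (((((γa.prod (γb.prod γab)).map
          (⇑(MeasurableEquiv.prodAssoc : (ℝ × ℝ) × ℝ ≃ᵐ ℝ × (ℝ × ℝ)).symm)).map
          (Prod.map Tmap id)).map
          (⇑(MeasurableEquiv.prodAssoc : (ℝ × ℝ) × ℝ ≃ᵐ ℝ × (ℝ × ℝ)))).map
          (Prod.map id (Umap ∘ Prod.swap))).map
          (⇑(MeasurableEquiv.prodAssoc : (ℝ × ℝ) × ℝ ≃ᵐ ℝ × (ℝ × ℝ)) ∘ Prod.swap) := by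
        rw [Measure.map_map m2 m1, Measure.map_map m3 (m2.comp m1),
          Measure.map_map m4 (m3.comp (m2.comp m1)),
          Measure.map_map (m3.comp m5) (m4.comp (m3.comp (m2.comp m1)))]
        rfl
    _ = γa.prod (γb.prod γab) := by
        rw [s1, s2, s3, s4, ← Measure.map_map m3 m5, s5, s6]

lemma measurable_sqrt : Measurable Real.sqrt := Real.continuous_sqrt.measurable

lemma chi_shape_pos {k : ℕ} (hk : 1 ≤ k) : 0 < (k : ℝ) / 2 := by
  have : (0:ℝ) < k := by exact_mod_cast hk
  linarith

lemma isProbabilityMeasure_chiMeasure {k : ℕ} (hk : 1 ≤ k) :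
    IsProbabilityMeasure (chiMeasure k) := by
  haveI : IsProbabilityMeasure (gammaMeasure ((k : ℝ) / 2) (1 / 2)) :=
    isProbabilityMeasure_gammaMeasure (chi_shape_pos hk) (by norm_num)
  exact Measure.isProbabilityMeasure_map measurable_sqrt.aemeasurable

lemma chiMeasure_ae_pos (k : ℕ) : ∀ᵐ t ∂(chiMeasure k), 0 < t := by
  rw [chiMeasure]
  rw [ae_map_iff measurable_sqrt.aemeasurable (measurableSet_Ioi (a := (0:ℝ)))]
  exact (gammaMeasure_ae_pos _ _).mono fun x hx => Real.sqrt_pos.mpr hx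

/-- The chi-level triple map `(c, (b, d)) ↦ (dc/√(b²+c²), (db/√(b²+c²), √(b²+c²)))`. -/
def Fchi : ℝ × (ℝ × ℝ) → ℝ × (ℝ × ℝ) := fun p =>
  (p.2.2 * p.1 / Real.sqrt (p.2.1 ^ 2 + p.1 ^ 2),
   (p.2.2 * p.2.1 / Real.sqrt (p.2.1 ^ 2 + p.1 ^ 2), Real.sqrt (p.2.1 ^ 2 + p.1 ^ 2)))

lemma Fchi_def (p : ℝ × (ℝ × ℝ)) : Fchi p =
    (p.2.2 * p.1 / Real.sqrt (p.2.1 ^ 2 + p.1 ^ 2),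
     (p.2.2 * p.2.1 / Real.sqrt (p.2.1 ^ 2 + p.1 ^ 2), Real.sqrt (p.2.1 ^ 2 + p.1 ^ 2))) :=
  rfl

lemma measurable_Fchi : Measurable Fchi := by
  unfold Fchi
  fun_prop

lemma triple_gamma_ae_pos {a b c r : ℝ} (ha : 0 < a) (hb : 0 < b) (hc : 0 < c) (hr : 0 < r) :
    ∀ᵐ p : ℝ × (ℝ × ℝ)
      ∂((gammaMeasure a r).prod ((gammaMeasure b r).prod (gammaMeasure c r))),
      0 < p.1 ∧ 0 < p.2.1 ∧ 0 < p.2.2 := by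
  haveI : IsProbabilityMeasure (gammaMeasure a r) := isProbabilityMeasure_gammaMeasure ha hr
  haveI : IsProbabilityMeasure (gammaMeasure b r) := isProbabilityMeasure_gammaMeasure hb hr
  haveI : IsProbabilityMeasure (gammaMeasure c r) := isProbabilityMeasure_gammaMeasure hc hr
  have h23 : ∀ᵐ q : ℝ × ℝ ∂((gammaMeasure b r).prod (gammaMeasure c r)),
      0 < q.1 ∧ 0 < q.2 := prod_gamma_ae_pos hb hc hr
  rw [ae_iff] at h23 ⊢
  have hnull : ((gammaMeasure a r).prod ((gammaMeasure b r).prod (gammaMeasure c r)))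
      ((Iic 0 ×ˢ univ) ∪ (univ ×ˢ {q : ℝ × ℝ | ¬(0 < q.1 ∧ 0 < q.2)})) = 0 := by
    refine measure_union_null ?_ ?_
    · rw [Measure.prod_prod, gammaMeasure_Iic_zero, zero_mul]
    · rw [Measure.prod_prod, h23, mul_zero]
  refine measure_mono_null (fun p hp => ?_) hnull
  simp only [mem_setOf_eq, not_and_or, not_lt] at hp
  rcases hp with h | h
  · exact Or.inl ⟨h, mem_univ _⟩
  · exact Or.inr ⟨mem_univ _, by
      simp only [mem_setOf_eq, not_and_or, not_lt]
      exact h⟩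

theorem map_Fchi_chi {b : ℕ} (hb : 1 ≤ b) :
    ((chiMeasure 1).prod ((chiMeasure b).prod (chiMeasure (b + 1)))).map Fchi
      = (chiMeasure 1).prod ((chiMeasure b).prod (chiMeasure (b + 1))) := by
  have h2 : (0:ℝ) < 1/2 := by norm_num
  have hbr : (0:ℝ) < (b : ℝ) / 2 := chi_shape_pos hb
  have hcast : ((b + 1 : ℕ) : ℝ) / 2 = 1 / 2 + (b : ℝ) / 2 := by push_cast; ring
  have hcast1 : ((1 : ℕ) : ℝ) / 2 = 1 / 2 := by norm_num
  haveI : IsProbabilityMeasure (gammaMeasure (1/2 : ℝ) (1/2)) :=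
    isProbabilityMeasure_gammaMeasure (by norm_num) (by norm_num)
  haveI : IsProbabilityMeasure (gammaMeasure ((b:ℝ)/2) (1/2)) :=
    isProbabilityMeasure_gammaMeasure hbr (by norm_num)
  haveI : IsProbabilityMeasure (gammaMeasure (1/2 + (b:ℝ)/2) (1/2)) :=
    isProbabilityMeasure_gammaMeasure (by linarith) (by norm_num)
  set Γ3 := (gammaMeasure (1/2) (1/2)).prod
    ((gammaMeasure ((b:ℝ)/2) (1/2)).prod (gammaMeasure (1/2 + (b:ℝ)/2) (1/2))) with hΓ3
  have rt3m : Measurable (Prod.map Real.sqrt (Prod.map Real.sqrt Real.sqrt)) :=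
    measurable_sqrt.prodMap (measurable_sqrt.prodMap measurable_sqrt)
  have hM3 : (chiMeasure 1).prod ((chiMeasure b).prod (chiMeasure (b + 1)))
      = Γ3.map (Prod.map Real.sqrt (Prod.map Real.sqrt Real.sqrt)) := by
    rw [hΓ3, ← Measure.map_prod_map _ _ measurable_sqrt (measurable_sqrt.prodMap measurable_sqrt),
      ← Measure.map_prod_map _ _ measurable_sqrt measurable_sqrt]
    rw [chiMeasure, chiMeasure, chiMeasure, hcast, hcast1]
  have hae : (Fchi ∘ Prod.map Real.sqrt (Prod.map Real.sqrt Real.sqrt)) =ᵐ[Γ3]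
      ((Prod.map Real.sqrt (Prod.map Real.sqrt Real.sqrt)) ∘ Ggam) := by
    refine (triple_gamma_ae_pos h2 hbr (by linarith) (by norm_num)).mono fun p hp => ?_
    obtain ⟨x, y, z⟩ := p
    obtain ⟨hx, hy, hz⟩ := hp
    simp only at hx hy hz
    have hxy : (0:ℝ) < x + y := by linarith
    show Fchi (Real.sqrt x, (Real.sqrt y, Real.sqrt z)) = _
    rw [Function.comp_apply, Ggam_apply hxy.ne']
    have hsq : Real.sqrt y ^ 2 + Real.sqrt x ^ 2 = x + y := by
      rw [Real.sq_sqrt hy.le, Real.sq_sqrt hx.le]; ring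
    have e1 : Real.sqrt z * Real.sqrt x / Real.sqrt (x + y)
        = Real.sqrt (z * (x / (x + y))) := by
      rw [Real.sqrt_mul hz.le, Real.sqrt_div hx.le, mul_div_assoc]
    have e2 : Real.sqrt z * Real.sqrt y / Real.sqrt (x + y)
        = Real.sqrt (z * (y / (x + y))) := by
      rw [Real.sqrt_mul hz.le, Real.sqrt_div hy.le, mul_div_assoc]
    show (Real.sqrt z * Real.sqrt x / Real.sqrt (Real.sqrt y ^ 2 + Real.sqrt x ^ 2),
      (Real.sqrt z * Real.sqrt y / Real.sqrt (Real.sqrt y ^ 2 + Real.sqrt x ^ 2),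
        Real.sqrt (Real.sqrt y ^ 2 + Real.sqrt x ^ 2))) = _
    rw [hsq, e1, e2]
    rfl
  rw [hM3, Measure.map_map measurable_Fchi rt3m, Measure.map_congr hae,
    ← Measure.map_map rt3m measurable_Ggam, map_Ggam_gamma h2 hbr (by norm_num)]



lemma iIndepFun_map_pi {Ω : Type*} [MeasurableSpace Ω] {ι : Type*} [Fintype ι] {μ : Measure Ω} [IsProbabilityMeasure μ]
    {f : ι → Ω → ℝ} (hmeas : ∀ i, Measurable (f i))
    (hind : iIndepFun f μ) :
    μ.map (fun ω i => f i ω) = Measure.pi (fun i => μ.map (f i)) := by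
  haveI : ∀ i, IsProbabilityMeasure (μ.map (f i)) :=
    fun i => Measure.isProbabilityMeasure_map (hmeas i).aemeasurable
  refine (Measure.pi_eq fun s hs => ?_).symm
  rw [Measure.map_apply (measurable_pi_lambda _ hmeas) (MeasurableSet.univ_pi hs)]
  have hpre : (fun ω i => f i ω) ⁻¹' (Set.pi univ s) = ⋂ i ∈ Finset.univ, f i ⁻¹' (s i) := by
    ext ω
    simp [Set.mem_pi]
  rw [hpre, hind.measure_inter_preimage_eq_mul Finset.univ (fun i _ => hs i)]
  exact Finset.prod_congr rfl fun i _ => (Measure.map_apply (hmeas i) (hs i)).symm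

lemma pi_map_eval {ι : Type*} [Fintype ι] (marg : ι → Measure ℝ)
    [∀ i, IsProbabilityMeasure (marg i)] (i : ι) :
    (Measure.pi marg).map (fun v => v i) = marg i := by
  classical
  ext s hs
  rw [Measure.map_apply (measurable_pi_apply i) hs]
  have hpre : (fun v : ι → ℝ => v i) ⁻¹' s
      = Set.pi univ (Function.update (fun _ => (univ : Set ℝ)) i s) :=
    Set.eval_preimage
  rw [hpre, Measure.pi_pi, Finset.prod_eq_single i
    (fun j _ hj => by simp [Function.update_of_ne hj]) (by simp)]
  simp

lemma iIndepFun_of_map_pi {Ω : Type*} [MeasurableSpace Ω] {ι : Type*} [Fintype ι] {μ : Measure Ω}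
    {f : ι → Ω → ℝ} (hmeas : ∀ i, Measurable (f i)) {ν : ι → Measure ℝ}
    [∀ i, IsProbabilityMeasure (ν i)]
    (h : μ.map (fun ω i => f i ω) = Measure.pi ν) :
    iIndepFun f μ ∧ ∀ i, μ.map (f i) = ν i := by
  classical
  have hvec : Measurable (fun ω i => f i ω) := measurable_pi_lambda _ hmeas
  have hmarg : ∀ i, μ.map (f i) = ν i := by
    intro i
    rw [show f i = (fun v : ι → ℝ => v i) ∘ (fun ω j => f j ω) from rfl,
      ← Measure.map_map (measurable_pi_apply i) hvec, h, pi_map_eval]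
  refine ⟨?_, hmarg⟩
  rw [iIndepFun_iff_measure_inter_preimage_eq_mul]
  intro S sets H
  set sets' : ι → Set ℝ := fun j => if j ∈ S then sets j else univ with hsets'def
  have hsets' : ∀ j, MeasurableSet (sets' j) := by
    intro j
    by_cases hj : j ∈ S
    · simpa [hsets'def, hj] using H j hj
    · simp [hsets'def, hj]
  have hpre : (⋂ i ∈ S, f i ⁻¹' sets i) = (fun ω j => f j ω) ⁻¹' (Set.pi univ sets') := by
    ext ω
    simp only [Set.mem_iInter, Set.mem_preimage, Set.mem_pi, Set.mem_univ, forall_true_left,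
      hsets'def]
    constructor
    · intro hh j
      by_cases hj : j ∈ S
      · simpa [hj] using hh j hj
      · simp [hj]
    · intro hh j hj
      have := hh j
      simpa [hj] using this
  rw [hpre, ← Measure.map_apply hvec (MeasurableSet.univ_pi hsets'), h, Measure.pi_pi]
  rw [← Finset.prod_subset (Finset.subset_univ S)
    (fun j _ hj => by simp [hsets'def, hj])]
  refine Finset.prod_congr rfl fun i hi => ?_
  rw [show sets' i = sets i from if_pos hi, ← hmarg i, Measure.map_apply (hmeas i) (H i hi)]

lemma measurable_triple_update {ι : Type*} [Fintype ι] [DecidableEq ι]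
    (i0 i1 i2 : ι) (F : ℝ × (ℝ × ℝ) → ℝ × (ℝ × ℝ)) (hF : Measurable F) :
    Measurable (fun (v : ι → ℝ) (j : ι) =>
      if j = i0 then (F (v i0, (v i1, v i2))).1
      else if j = i1 then (F (v i0, (v i1, v i2))).2.1
      else if j = i2 then (F (v i0, (v i1, v i2))).2.2
      else v j) := by
  have htriple_meas : Measurable fun v : ι → ℝ => (v i0, (v i1, v i2)) :=
    (measurable_pi_apply i0).prodMk
      ((measurable_pi_apply i1).prodMk (measurable_pi_apply i2))
  refine measurable_pi_lambda _ fun j => ?_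
  by_cases hj0 : j = i0
  · subst hj0; simpa [Function.comp_def] using (measurable_fst.comp (hF.comp htriple_meas))
  by_cases hj1 : j = i1
  · subst hj1
    simpa [hj0, Function.comp_def] using ((measurable_fst.comp measurable_snd).comp (hF.comp htriple_meas))
  by_cases hj2 : j = i2
  · subst hj2
    simpa [hj0, hj1, Function.comp_def] using
      ((measurable_snd.comp measurable_snd).comp (hF.comp htriple_meas))
  · simpa [hj0, hj1, hj2] using measurable_pi_apply j

/-- Coordinate surgery: applying a law-preserving map to three distinct coordinates
of a product probability measure preserves the product measure. -/
lemma pi_map_triple {ι : Type*} [Fintype ι] [DecidableEq ι] (marg : ι → Measure ℝ)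
    [∀ i, IsProbabilityMeasure (marg i)]
    (i0 i1 i2 : ι) (h01 : i0 ≠ i1) (h02 : i0 ≠ i2) (h12 : i1 ≠ i2)
    (F : ℝ × (ℝ × ℝ) → ℝ × (ℝ × ℝ)) (hF : Measurable F)
    (hFmap : (((marg i0).prod ((marg i1).prod (marg i2))).map F)
      = (marg i0).prod ((marg i1).prod (marg i2))) :
    (Measure.pi marg).map (fun v j =>
      if j = i0 then (F (v i0, (v i1, v i2))).1
      else if j = i1 then (F (v i0, (v i1, v i2))).2.1
      else if j = i2 then (F (v i0, (v i1, v i2))).2.2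
      else v j) = Measure.pi marg := by
  set P := Measure.pi marg with hP
  have htriple_meas : Measurable fun v : ι → ℝ => (v i0, (v i1, v i2)) :=
    (measurable_pi_apply i0).prodMk
      ((measurable_pi_apply i1).prodMk (measurable_pi_apply i2))
  have hΨ : Measurable fun v : ι → ℝ => (fun j =>
      if j = i0 then (F (v i0, (v i1, v i2))).1
      else if j = i1 then (F (v i0, (v i1, v i2))).2.1
      else if j = i2 then (F (v i0, (v i1, v i2))).2.2
      else v j) := measurable_triple_update i0 i1 i2 F hF
  have hid : P.map (fun v j => v j) = Measure.pi marg := by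
    rw [show (fun v : ι → ℝ => fun j => v j) = id from rfl, Measure.map_id]
  obtain ⟨hindep, -⟩ := iIndepFun_of_map_pi (fun i => measurable_pi_apply i) hid
  have law12 : P.map (fun v => (v i1, v i2)) = (marg i1).prod (marg i2) := by
    have h12' : IndepFun (fun v : ι → ℝ => v i1) (fun v : ι → ℝ => v i2) P :=
      hindep.indepFun h12
    rw [(indepFun_iff_map_prod_eq_prod_map_map (measurable_pi_apply i1).aemeasurable
      (measurable_pi_apply i2).aemeasurable).mp h12', pi_map_eval, pi_map_eval]
  have law3 : P.map (fun v => (v i0, (v i1, v i2)))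
      = (marg i0).prod ((marg i1).prod (marg i2)) := by
    have h0' : IndepFun (fun v : ι → ℝ => v i0) (fun v : ι → ℝ => (v i1, v i2)) P :=
      (hindep.indepFun_prodMk (fun i => measurable_pi_apply i) i1 i2 i0
        h01.symm h02.symm).symm
    rw [(indepFun_iff_map_prod_eq_prod_map_map (measurable_pi_apply i0).aemeasurable
      ((measurable_pi_apply i1).prodMk (measurable_pi_apply i2)).aemeasurable).mp h0',
      pi_map_eval, law12]
  refine (Measure.pi_eq fun s hs => ?_).symm
  rw [Measure.map_apply hΨ (MeasurableSet.univ_pi hs)]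
  classical
  set S : Finset ι := {i0, i1, i2} with hS
  have hST : Disjoint S Sᶜ := disjoint_compl_right
  have hblock := hindep.indepFun_finset S Sᶜ hST (fun i => measurable_pi_apply i)
  set E : Set (ℝ × (ℝ × ℝ)) := F ⁻¹' ((s i0) ×ˢ ((s i1) ×ˢ (s i2))) with hE
  have hrectmeas : MeasurableSet ((s i0) ×ˢ ((s i1) ×ˢ (s i2))) :=
    (hs i0).prod ((hs i1).prod (hs i2))
  have hEmeas : MeasurableSet E := hF hrectmeas
  have hi0S : i0 ∈ S := by simp [hS]
  have hi1S : i1 ∈ S := by simp [hS]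
  have hi2S : i2 ∈ S := by simp [hS]
  set ES : Set ((i : S) → ℝ) :=
    (fun g : (i : S) → ℝ => (g ⟨i0, hi0S⟩, (g ⟨i1, hi1S⟩, g ⟨i2, hi2S⟩))) ⁻¹' E with hES
  have hESmeas : MeasurableSet ES :=
    ((measurable_pi_apply _).prodMk
      ((measurable_pi_apply _).prodMk (measurable_pi_apply _))) hEmeas
  set ET : Set ((i : (Sᶜ : Finset ι)) → ℝ) := Set.pi univ (fun j => s j) with hET
  have hETmeas : MeasurableSet ET := MeasurableSet.univ_pi (fun j => hs j)
  have hne10 : ¬ (i1 = i0) := fun h => h01 h.symm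
  have hne20 : ¬ (i2 = i0) := fun h => h02 h.symm
  have hne21 : ¬ (i2 = i1) := fun h => h12 h.symm
  have hset : (fun v : ι → ℝ => fun j =>
      if j = i0 then (F (v i0, (v i1, v i2))).1
      else if j = i1 then (F (v i0, (v i1, v i2))).2.1
      else if j = i2 then (F (v i0, (v i1, v i2))).2.2
      else v j) ⁻¹' (Set.pi univ s)
      = ((fun v (i : S) => v i) ⁻¹' ES) ∩ ((fun v (i : (Sᶜ : Finset ι)) => v i) ⁻¹' ET) := by
    ext v
    simp only [Set.mem_preimage, Set.mem_pi, Set.mem_univ, forall_true_left,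
      Set.mem_inter_iff, hES, hET]
    constructor
    · intro h
      refine ⟨?_, ?_⟩
      · have h0 := h i0
        have h1 := h i1
        have h2 := h i2
        rw [if_pos rfl] at h0
        rw [if_neg hne10, if_pos rfl] at h1
        rw [if_neg hne20, if_neg hne21, if_pos rfl] at h2
        exact ⟨h0, h1, h2⟩
      · intro j
        have hj := h j
        have hjS : (j : ι) ∉ S := Finset.mem_compl.mp j.2
        simp only [hS, Finset.mem_insert, Finset.mem_singleton, not_or] at hjS
        obtain ⟨hj0, hj1, hj2⟩ := hjS
        rwa [if_neg hj0, if_neg hj1, if_neg hj2] at hj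
    · rintro ⟨hFE, hrest⟩ j
      obtain ⟨hF0, hF1, hF2⟩ := hFE
      by_cases hj0 : j = i0
      · subst hj0; rw [if_pos rfl]; exact hF0
      by_cases hj1 : j = i1
      · subst hj1; rw [if_neg hj0, if_pos rfl]; exact hF1
      by_cases hj2 : j = i2
      · subst hj2; rw [if_neg hj0, if_neg hj1, if_pos rfl]; exact hF2
      · rw [if_neg hj0, if_neg hj1, if_neg hj2]
        have hjT : j ∈ (Sᶜ : Finset ι) := by
          rw [Finset.mem_compl]
          simp [hS, hj0, hj1, hj2]
        exact hrest ⟨j, hjT⟩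
  rw [hset, hblock.measure_inter_preimage_eq_mul ES ET hESmeas hETmeas]
  have hA : P ((fun v (i : S) => v (i : ι)) ⁻¹' ES)
      = marg i0 (s i0) * (marg i1 (s i1) * marg i2 (s i2)) := by
    have heq : ((fun v (i : S) => v (i : ι)) ⁻¹' ES)
        = (fun v : ι → ℝ => (v i0, (v i1, v i2))) ⁻¹' E := rfl
    rw [heq, ← Measure.map_apply htriple_meas hEmeas, law3, hE,
      ← Measure.map_apply hF hrectmeas, hFmap, Measure.prod_prod, Measure.prod_prod]
  have hB : P ((fun v (i : (Sᶜ : Finset ι)) => v (i : ι)) ⁻¹' ET)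
      = ∏ j ∈ Sᶜ, marg j (s j) := by
    have heq : ((fun v (i : (Sᶜ : Finset ι)) => v (i : ι)) ⁻¹' ET)
        = ⋂ j ∈ Sᶜ, (fun v : ι → ℝ => v j) ⁻¹' (s j) := by
      ext v
      simp [hET, Set.mem_pi, Subtype.forall]
    rw [heq, hindep.measure_inter_preimage_eq_mul Sᶜ (fun j _ => hs j)]
    refine Finset.prod_congr rfl fun j _ => ?_
    rw [← pi_map_eval marg j, Measure.map_apply (measurable_pi_apply j) (hs j)]
  rw [hA, hB]
  have hprodS : ∏ j ∈ S, marg j (s j)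
      = marg i0 (s i0) * (marg i1 (s i1) * marg i2 (s i2)) := by
    rw [hS, Finset.prod_insert (by simp [h01, h02]),
      Finset.prod_insert (by simp [h12]), Finset.prod_singleton]
  rw [← Finset.prod_mul_prod_compl S (fun j => marg j (s j)), hprodS]

end

end RQAux

open RQAux

set_option maxHeartbeats 2000000 in
/-- The RQ-construction: if `τ₁,…,τ_{2m-1}` are independent with `τ_k ~ χ_k` and
`τ_{2m}` is independent of these (with arbitrary distribution), and
`ξ₂,…,ξ_{2m-1}, ξ_{2m+1}` is the positive solution of the system
`ξ_{2k+1}² + ξ_{2k-2}² = τ_{2k}² + τ_{2k-1}²` (`k = 1,…,m`, `ξ₀ = 0`) and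
`ξ_{2k+1} ξ_{2k} = τ_{2k+1} τ_{2k}` (`k = 1,…,m-1`), with
`ξ₁ = √(τ_{2m-1}² - ξ_{2m-2}²)`, then `ξ₁, ξ₂, …, ξ_{2m-1}, τ_{2m}` are mutually
independent, `ξ_k ~ χ_k`, and `ξ_{2m+1} = √(ξ₁² + τ_{2m}²)`. -/
theorem rq_construction_chi
    {Ω : Type*} [MeasureSpace Ω] (μ : Measure Ω) [IsProbabilityMeasure μ]
    (m : ℕ) (hm : 1 ≤ m) (τ ξ : ℕ → Ω → ℝ)
    (hτmeas : ∀ k, Measurable (τ k)) (hξmeas : ∀ k, Measurable (ξ k))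
    (hτindep : iIndepFun
      (fun i : Fin (2 * m) => τ ((i : ℕ) + 1)) μ)
    (hτdist : ∀ k, 1 ≤ k → k ≤ 2 * m - 1 → μ.map (τ k) = chiMeasure k)
    (hτpos : ∀ k, 1 ≤ k → k ≤ 2 * m → ∀ ω, 0 < τ k ω)
    (hξ0 : ∀ ω, ξ 0 ω = 0)
    (hξpos : ∀ k, 2 ≤ k → k ≤ 2 * m - 1 ∨ k = 2 * m + 1 → ∀ ω, 0 < ξ k ω)
    (heq1 : ∀ k, 1 ≤ k → k ≤ m → ∀ ω,
      ξ (2 * k + 1) ω ^ 2 + ξ (2 * k - 2) ω ^ 2 =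
        τ (2 * k) ω ^ 2 + τ (2 * k - 1) ω ^ 2)
    (heq2 : ∀ k, 1 ≤ k → k ≤ m - 1 → ∀ ω,
      ξ (2 * k + 1) ω * ξ (2 * k) ω = τ (2 * k + 1) ω * τ (2 * k) ω)
    (hξ1 : ∀ ω, ξ 1 ω = Real.sqrt (τ (2 * m - 1) ω ^ 2 - ξ (2 * m - 2) ω ^ 2)) :
    iIndepFun
        (fun i : Fin (2 * m) =>
          if (i : ℕ) + 1 ≤ 2 * m - 1 then ξ ((i : ℕ) + 1) else τ (2 * m)) μ ∧
      (∀ k, 1 ≤ k → k ≤ 2 * m - 1 → μ.map (ξ k) = chiMeasure k) ∧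
      ∀ ω, ξ (2 * m + 1) ω = Real.sqrt (ξ 1 ω ^ 2 + τ (2 * m) ω ^ 2) := by
  classical
  -- interlacing chain, pointwise
  have chain : ∀ k, 1 ≤ k → k ≤ m → ∀ ω,
      0 ≤ ξ (2 * k - 2) ω ∧ ξ (2 * k - 2) ω < τ (2 * k - 1) ω := by
    intro k
    induction k with
    | zero => exact fun h => absurd h (by omega)
    | succ n ih =>
      intro _ hkm ω
      by_cases hn : n = 0
      · subst hn
        rw [show 2 * (0 + 1) - 2 = 0 from by norm_num,
          show 2 * (0 + 1) - 1 = 1 from by norm_num, hξ0]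
        exact ⟨le_refl _, hτpos 1 le_rfl (by omega) ω⟩
      · have hn1 : 1 ≤ n := Nat.one_le_iff_ne_zero.mpr hn
        obtain ⟨hnn, hlt⟩ := ih hn1 (by omega) ω
        rw [show 2 * (n + 1) - 2 = 2 * n from by omega,
          show 2 * (n + 1) - 1 = 2 * n + 1 from by omega]
        have ho : 0 < ξ (2 * n + 1) ω := hξpos _ (by omega) (Or.inl (by omega)) ω
        have hx2n : 0 < ξ (2 * n) ω := hξpos _ (by omega) (Or.inl (by omega)) ω
        have h1 := heq1 n hn1 (by omega) ω
        have h2 := heq2 n hn1 (by omega) ω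
        have hb : 0 < τ (2 * n) ω := hτpos _ (by omega) (by omega) ω
        have hd : 0 < τ (2 * n + 1) ω := hτpos _ (by omega) (by omega) ω
        have hsq : ξ (2 * n - 2) ω ^ 2 < τ (2 * n - 1) ω ^ 2 := by nlinarith
        have hoge : τ (2 * n) ω < ξ (2 * n + 1) ω := by nlinarith
        exact ⟨hx2n.le, by nlinarith⟩
  -- conclusion 3
  have concl3 : ∀ ω, ξ (2 * m + 1) ω = Real.sqrt (ξ 1 ω ^ 2 + τ (2 * m) ω ^ 2) := by
    intro ω
    obtain ⟨hnn, hlt⟩ := chain m hm le_rfl ω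
    have hx1 : ξ 1 ω ^ 2 = τ (2 * m - 1) ω ^ 2 - ξ (2 * m - 2) ω ^ 2 := by
      rw [hξ1 ω, Real.sq_sqrt (by nlinarith)]
    have h1 := heq1 m hm le_rfl ω
    have ho : 0 < ξ (2 * m + 1) ω := hξpos _ (by omega) (Or.inr rfl) ω
    have hval : ξ 1 ω ^ 2 + τ (2 * m) ω ^ 2 = ξ (2 * m + 1) ω ^ 2 := by
      rw [hx1]; nlinarith
    rw [hval, Real.sqrt_sq ho.le]
  -- the family of marginal laws
  set marg : Fin (2 * m) → Measure ℝ := fun i =>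
    if (i : ℕ) + 1 ≤ 2 * m - 1 then chiMeasure ((i : ℕ) + 1) else μ.map (τ (2 * m))
    with hmargdef
  haveI hmargP : ∀ i, IsProbabilityMeasure (marg i) := by
    intro i
    rw [hmargdef]
    dsimp only
    by_cases h : (i : ℕ) + 1 ≤ 2 * m - 1
    · rw [if_pos h]
      exact isProbabilityMeasure_chiMeasure (by omega)
    · rw [if_neg h]
      exact Measure.isProbabilityMeasure_map (hτmeas _).aemeasurable
  -- measurability of the stage-k families
  have hZmeas : ∀ k : ℕ, ∀ i : Fin (2 * m), Measurable fun ω =>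
      (if (i : ℕ) = 0 then Real.sqrt (τ (2 * k - 1) ω ^ 2 - ξ (2 * k - 2) ω ^ 2)
       else if (i : ℕ) + 1 ≤ 2 * k - 1 then ξ ((i : ℕ) + 1) ω
       else τ ((i : ℕ) + 1) ω) := by
    intro k i
    by_cases h0 : (i : ℕ) = 0
    · simpa [h0, Function.comp_def, Pi.sub_apply] using
        measurable_sqrt.comp (((hτmeas (2 * k - 1)).pow_const 2).sub
          ((hξmeas (2 * k - 2)).pow_const 2))
    by_cases h1 : (i : ℕ) + 1 ≤ 2 * k - 1
    · simpa [h0, h1] using hξmeas ((i : ℕ) + 1)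
    · simpa [h0, h1] using hτmeas ((i : ℕ) + 1)
  -- the inductive invariant
  have Inv : ∀ k, 1 ≤ k → k ≤ m →
      μ.map (fun ω (i : Fin (2 * m)) =>
        if (i : ℕ) = 0 then Real.sqrt (τ (2 * k - 1) ω ^ 2 - ξ (2 * k - 2) ω ^ 2)
        else if (i : ℕ) + 1 ≤ 2 * k - 1 then ξ ((i : ℕ) + 1) ω
        else τ ((i : ℕ) + 1) ω) = Measure.pi marg := by
    intro k
    induction k with
    | zero => exact fun h => absurd h (by omega)
    | succ n ih =>
      intro _ hkm
      by_cases hn : n = 0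
      · subst hn
        have hfun : (fun ω (i : Fin (2 * m)) =>
            if (i : ℕ) = 0 then
              Real.sqrt (τ (2 * (0 + 1) - 1) ω ^ 2 - ξ (2 * (0 + 1) - 2) ω ^ 2)
            else if (i : ℕ) + 1 ≤ 2 * (0 + 1) - 1 then ξ ((i : ℕ) + 1) ω
            else τ ((i : ℕ) + 1) ω)
            = fun ω (i : Fin (2 * m)) => τ ((i : ℕ) + 1) ω := by
          funext ω i
          by_cases h0 : (i : ℕ) = 0
          · rw [if_pos h0, show 2 * (0 + 1) - 1 = 1 from by norm_num,
              show 2 * (0 + 1) - 2 = 0 from by norm_num, hξ0, h0]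
            have h2 : (0:ℝ) ^ 2 = 0 := by norm_num
            rw [h2, sub_zero, Real.sqrt_sq (hτpos 1 le_rfl (by omega) ω).le]
          · rw [if_neg h0, if_neg (by omega)]
        rw [hfun, iIndepFun_map_pi (fun i => hτmeas _) hτindep]
        congr 1
        funext i
        rw [hmargdef]
        dsimp only
        by_cases h : (i : ℕ) + 1 ≤ 2 * m - 1
        · rw [if_pos h]
          exact hτdist _ (by omega) h
        · rw [if_neg h]
          have : (i : ℕ) + 1 = 2 * m := by have := i.isLt; omega
          rw [this]
      · -- inductive step
        have hn1 : 1 ≤ n := Nat.one_le_iff_ne_zero.mpr hn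
        have ihh := ih hn1 (by omega)
        set i0 : Fin (2 * m) := ⟨0, by omega⟩ with hi0
        set i1 : Fin (2 * m) := ⟨2 * n - 1, by omega⟩ with hi1
        set i2 : Fin (2 * m) := ⟨2 * n, by omega⟩ with hi2
        have hi0v : (i0 : ℕ) = 0 := rfl
        have hi1v : (i1 : ℕ) = 2 * n - 1 := rfl
        have hi2v : (i2 : ℕ) = 2 * n := rfl
        have hne01 : i0 ≠ i1 := by
          simp only [Fin.ne_iff_vne, hi0v, hi1v]; omega
        have hne02 : i0 ≠ i2 := by
          simp only [Fin.ne_iff_vne, hi0v, hi2v]; omega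
        have hne12 : i1 ≠ i2 := by
          simp only [Fin.ne_iff_vne, hi1v, hi2v]; omega
        -- pointwise identities for the triple update
        have key : ∀ ω,
            (ξ (2 * n + 1) ω = Real.sqrt (τ (2 * n) ω ^ 2 +
                Real.sqrt (τ (2 * n - 1) ω ^ 2 - ξ (2 * n - 2) ω ^ 2) ^ 2)) ∧
            (ξ (2 * n) ω = τ (2 * n + 1) ω * τ (2 * n) ω / ξ (2 * n + 1) ω) ∧
            (Real.sqrt (τ (2 * n + 1) ω ^ 2 - ξ (2 * n) ω ^ 2)
              = τ (2 * n + 1) ω *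
                  Real.sqrt (τ (2 * n - 1) ω ^ 2 - ξ (2 * n - 2) ω ^ 2) /
                    ξ (2 * n + 1) ω) := by
          intro ω
          obtain ⟨hnn, hlt⟩ := chain n hn1 (by omega) ω
          set c := Real.sqrt (τ (2 * n - 1) ω ^ 2 - ξ (2 * n - 2) ω ^ 2) with hc
          have hcnn : 0 ≤ c := Real.sqrt_nonneg _
          have hc2 : c ^ 2 = τ (2 * n - 1) ω ^ 2 - ξ (2 * n - 2) ω ^ 2 :=
            Real.sq_sqrt (by nlinarith)
          have ho : 0 < ξ (2 * n + 1) ω := hξpos _ (by omega) (Or.inl (by omega)) ω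
          have hb : 0 < τ (2 * n) ω := hτpos _ (by omega) (by omega) ω
          have hd : 0 < τ (2 * n + 1) ω := hτpos _ (by omega) (by omega) ω
          have h1 := heq1 n hn1 (by omega) ω
          have h2 := heq2 n hn1 (by omega) ω
          have ho2 : ξ (2 * n + 1) ω ^ 2 = τ (2 * n) ω ^ 2 + c ^ 2 := by
            rw [hc2]; linarith
          have f1 : ξ (2 * n + 1) ω = Real.sqrt (τ (2 * n) ω ^ 2 + c ^ 2) := by
            rw [← ho2, Real.sqrt_sq ho.le]
          have f2 : ξ (2 * n) ω = τ (2 * n + 1) ω * τ (2 * n) ω / ξ (2 * n + 1) ω := by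
            rw [eq_div_iff ho.ne']
            linear_combination h2
          have f3 : Real.sqrt (τ (2 * n + 1) ω ^ 2 - ξ (2 * n) ω ^ 2)
              = τ (2 * n + 1) ω * c / ξ (2 * n + 1) ω := by
            have hval : τ (2 * n + 1) ω ^ 2 - ξ (2 * n) ω ^ 2
                = (τ (2 * n + 1) ω * c / ξ (2 * n + 1) ω) ^ 2 := by
              rw [f2]
              field_simp
              nlinarith [ho2]
            rw [hval, Real.sqrt_sq (by positivity)]
          exact ⟨f1, f2, f3⟩
        -- rewrite the new family as a triple update of the old family
        rw [show 2 * (n + 1) - 1 = 2 * n + 1 from by omega,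
          show 2 * (n + 1) - 2 = 2 * n from by omega]
        have hcomp : (fun ω (i : Fin (2 * m)) =>
            if (i : ℕ) = 0 then Real.sqrt (τ (2 * n + 1) ω ^ 2 - ξ (2 * n) ω ^ 2)
            else if (i : ℕ) + 1 ≤ 2 * n + 1 then ξ ((i : ℕ) + 1) ω
            else τ ((i : ℕ) + 1) ω)
            = (fun v (j : Fin (2 * m)) =>
                if j = i0 then (Fchi (v i0, (v i1, v i2))).1
                else if j = i1 then (Fchi (v i0, (v i1, v i2))).2.1
                else if j = i2 then (Fchi (v i0, (v i1, v i2))).2.2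
                else v j)
              ∘ (fun ω (i : Fin (2 * m)) =>
                if (i : ℕ) = 0 then Real.sqrt (τ (2 * n - 1) ω ^ 2 - ξ (2 * n - 2) ω ^ 2)
                else if (i : ℕ) + 1 ≤ 2 * n - 1 then ξ ((i : ℕ) + 1) ω
                else τ ((i : ℕ) + 1) ω) := by
          funext ω j
          obtain ⟨key1, key2, key3⟩ := key ω
          have hA : ¬ (2 * n - 1 = 0) := by omega
          have hB : ¬ (2 * n - 1 + 1 ≤ 2 * n - 1) := by omega
          have hB' : ¬ (2 * n ≤ 2 * n - 1) := by omega
          have hC : ¬ (2 * n = 0) := by omega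
          have hD : ¬ (2 * n + 1 ≤ 2 * n - 1) := by omega
          have e3 : 2 * n - 1 + 1 = 2 * n := by omega
          simp only [Function.comp_apply, hi0v, hi1v, hi2v, if_true, if_neg hA, if_neg hB,
            if_neg hB', if_neg hC, if_neg hD, e3]
          rw [Fchi_def]
          by_cases hj0 : j = i0
          · rw [if_pos hj0, if_pos (show (j : ℕ) = 0 from by rw [hj0, hi0v])]
            rw [key1] at key3
            simpa using key3
          by_cases hj1 : j = i1
          · rw [if_neg hj0, if_pos hj1,
              if_neg (show ¬ (j : ℕ) = 0 from by rw [hj1, hi1v]; omega),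
              if_pos (show (j : ℕ) + 1 ≤ 2 * n + 1 from by rw [hj1, hi1v]; omega)]
            have hjv : ((j : ℕ) + 1) = 2 * n := by rw [hj1, hi1v]; omega
            rw [hjv]
            rw [key1] at key2
            simpa using key2
          by_cases hj2 : j = i2
          · rw [if_neg hj0, if_neg hj1, if_pos hj2,
              if_neg (show ¬ (j : ℕ) = 0 from by rw [hj2, hi2v]; omega),
              if_pos (show (j : ℕ) + 1 ≤ 2 * n + 1 from by rw [hj2, hi2v])]
            have hjv : ((j : ℕ) + 1) = 2 * n + 1 := by rw [hj2, hi2v]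
            rw [hjv]
            simpa using key1
          · have hj0v : ¬ (j : ℕ) = 0 := fun h =>
              hj0 (Fin.ext (by rw [h, hi0v]))
            have hj1v : ¬ (j : ℕ) = 2 * n - 1 := fun h =>
              hj1 (Fin.ext (by rw [h, hi1v]))
            have hj2v : ¬ (j : ℕ) = 2 * n := fun h =>
              hj2 (Fin.ext (by rw [h, hi2v]))
            rw [if_neg hj0, if_neg hj1, if_neg hj2, if_neg hj0v, if_neg hj0v]
            by_cases hle : (j : ℕ) + 1 ≤ 2 * n - 1
            · rw [if_pos (by omega), if_pos hle]
            · rw [if_neg (by omega), if_neg hle]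
        have hΨmeas : Measurable (fun (v : Fin (2 * m) → ℝ) (j : Fin (2 * m)) =>
            if j = i0 then (Fchi (v i0, (v i1, v i2))).1
            else if j = i1 then (Fchi (v i0, (v i1, v i2))).2.1
            else if j = i2 then (Fchi (v i0, (v i1, v i2))).2.2
            else v j) :=
          measurable_triple_update i0 i1 i2 Fchi measurable_Fchi
        have hZn : Measurable (fun ω (i : Fin (2 * m)) =>
            if (i : ℕ) = 0 then Real.sqrt (τ (2 * n - 1) ω ^ 2 - ξ (2 * n - 2) ω ^ 2)
            else if (i : ℕ) + 1 ≤ 2 * n - 1 then ξ ((i : ℕ) + 1) ω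
            else τ ((i : ℕ) + 1) ω) :=
          measurable_pi_lambda _ (fun i => hZmeas n i)
        rw [hcomp, ← Measure.map_map hΨmeas hZn, ihh]
        have hm0 : marg i0 = chiMeasure 1 := by
          rw [hmargdef]; dsimp only
          rw [if_pos (show 0 + 1 ≤ 2 * m - 1 from by omega)]
        have hm1 : marg i1 = chiMeasure (2 * n) := by
          rw [hmargdef]; dsimp only
          rw [if_pos (show 2 * n - 1 + 1 ≤ 2 * m - 1 from by omega)]
          congr 1
          omega
        have hm2 : marg i2 = chiMeasure (2 * n + 1) := by
          rw [hmargdef]; dsimp only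
          rw [if_pos (show 2 * n + 1 ≤ 2 * m - 1 from by omega)]
        exact pi_map_triple marg i0 i1 i2 hne01 hne02 hne12 Fchi measurable_Fchi
          (by rw [hm0, hm1, hm2]; exact map_Fchi_chi (by omega))
  -- conclude
  have hfmeas : ∀ i : Fin (2 * m), Measurable
      (if (i : ℕ) + 1 ≤ 2 * m - 1 then ξ ((i : ℕ) + 1) else τ (2 * m)) := by
    intro i
    by_cases h : (i : ℕ) + 1 ≤ 2 * m - 1
    · rw [if_pos h]; exact hξmeas _
    · rw [if_neg h]; exact hτmeas _
  have hfinal : (fun ω (i : Fin (2 * m)) =>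
      if (i : ℕ) = 0 then Real.sqrt (τ (2 * m - 1) ω ^ 2 - ξ (2 * m - 2) ω ^ 2)
      else if (i : ℕ) + 1 ≤ 2 * m - 1 then ξ ((i : ℕ) + 1) ω
      else τ ((i : ℕ) + 1) ω)
      = fun ω (i : Fin (2 * m)) =>
        (if (i : ℕ) + 1 ≤ 2 * m - 1 then ξ ((i : ℕ) + 1) else τ (2 * m)) ω := by
    funext ω i
    by_cases h0 : (i : ℕ) = 0
    · rw [if_pos h0, ← hξ1 ω, if_pos (show (i : ℕ) + 1 ≤ 2 * m - 1 from by omega)]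
      have : (i : ℕ) + 1 = 1 := by omega
      rw [this]
    · rw [if_neg h0]
      by_cases h1 : (i : ℕ) + 1 ≤ 2 * m - 1
      · rw [if_pos h1, if_pos h1]
      · rw [if_neg h1, if_neg h1]
        have : (i : ℕ) + 1 = 2 * m := by have := i.isLt; omega
        rw [this]
  have hInvm := Inv m hm le_rfl
  rw [hfinal] at hInvm
  obtain ⟨hind, hmargs⟩ := iIndepFun_of_map_pi hfmeas hInvm
  refine ⟨hind, ?_, concl3⟩
  intro k hk1 hk2
  have hklt : k - 1 < 2 * m := by omega
  have h1 := hmargs ⟨k - 1, hklt⟩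
  rw [hmargdef] at h1
  dsimp only at h1
  rw [if_pos (show ((⟨k - 1, hklt⟩ : Fin (2 * m)) : ℕ) + 1 ≤ 2 * m - 1 from by
      simpa using by omega),
    if_pos (show ((⟨k - 1, hklt⟩ : Fin (2 * m)) : ℕ) + 1 ≤ 2 * m - 1 from by
      simpa using by omega)] at h1
  have he : ((⟨k - 1, hklt⟩ : Fin (2 * m)) : ℕ) + 1 = k := by simpa using by omega
  rw [he] at h1
  exact h1
end
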